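/- arXiv:2411.19516 — 12 statements merged into one kernel-verified Lean document; each statement's English description precedes it below -/
import Mathlib

section
/- The 4×3 matrix A with rows (1,1,0), (1,-1,0), (-1,0,1), (-1,0,-1) cannot be eliminated at any column; consequently A has no elimination ordering. -/
open Finset

/-- A matrix can be eliminated at column `j` if either every row with a positive
entry in column `j` vanishes outside column `j`, or every row with a negative
entry in column `j` vanishes outside column `j`. -/
def CanElim {m : ℕ} {ι : Type} (A : Matrix (Fin m) ι ℝ) (j : ι) : Prop :=
  (∀ i, 0 < A i j → ∀ j', j' ≠ j → A i j' = 0) ∨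
  (∀ i, A i j < 0 → ∀ j', j' ≠ j → A i j' = 0)

/-- The matrix obtained from `A` by zeroing out the columns in `J`. -/
def elimCols {m n : ℕ} (A : Matrix (Fin m) (Fin n) ℝ) (J : Finset (Fin n)) :
    Matrix (Fin m) (Fin n) ℝ :=
  fun i j => if j ∈ J then 0 else A i j

/-- `A` has an elimination ordering: an enumeration `σ 0, σ 1, …` of the columns such
that at each step, the matrix with the previously processed columns zeroed out can be
eliminated at the next column. -/
def HasEO {m n : ℕ} (A : Matrix (Fin m) (Fin n) ℝ) : Prop :=
  ∃ σ : Equiv.Perm (Fin n), ∀ t : Fin n,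
    CanElim (elimCols A ((Finset.univ.filter (fun t' => t' < t)).image σ)) (σ t)

/-- `x` has all coordinates in `D = {0,…,d}`. -/
def InD (d : ℕ) {ι : Type} (x : ι → ℤ) : Prop := ∀ j, 0 ≤ x j ∧ x j ≤ (d : ℤ)

/-- `x ∈ D^ι` is a feasible solution of the integer linear system `(A, b)`. -/
def Feas (d : ℕ) {m : ℕ} {ι : Type} [Fintype ι] (A : Matrix (Fin m) ι ℝ)
    (b : Fin m → ℝ) (x : ι → ℤ) : Prop :=
  InD d x ∧ ∀ i, b i ≤ ∑ j, A i j * (x j : ℝ)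

/-- Adjacency in the solution graph: both endpoints feasible and Hamming distance 1. -/
def SolStep (d : ℕ) {m : ℕ} {ι : Type} [Fintype ι] [DecidableEq ι]
    (A : Matrix (Fin m) ι ℝ) (b : Fin m → ℝ) (u v : ι → ℤ) : Prop :=
  Feas d A b u ∧ Feas d A b v ∧ hammingDist u v = 1

/-- The solution graph of `(A, b)` is connected. -/
def SolConnected (d : ℕ) {m : ℕ} {ι : Type} [Fintype ι] [DecidableEq ι]
    (A : Matrix (Fin m) ι ℝ) (b : Fin m → ℝ) : Prop :=
  ∀ x y, Feas d A b x → Feas d A b y → Relation.ReflTransGen (SolStep d A b) x y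

/-- The specific 4×3 matrix from the paper. -/
def A0 : Matrix (Fin 4) (Fin 3) ℝ :=
  !![1, 1, 0; 1, -1, 0; -1, 0, 1; -1, 0, -1]


lemma elimCols_empty {m n : ℕ} (A : Matrix (Fin m) (Fin n) ℝ) :
    elimCols A ∅ = A := by
  funext i j; simp [elimCols]

lemma noElim : ∀ j, ¬ CanElim A0 j := by
  intro j
  fin_cases j
  · rintro (h | h)
    · have := h 0 (by norm_num [A0, Matrix.vecHead, Matrix.vecTail]) 1 (by decide)
      norm_num [A0, Matrix.vecHead, Matrix.vecTail] at this
    · have := h 2 (by (show (-1:ℝ) < 0); norm_num) 2 (by decide)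
      (change (1:ℝ) = 0 at this); norm_num at this
  · rintro (h | h)
    · have := h 0 (by norm_num [A0, Matrix.vecHead, Matrix.vecTail]) 0 (by decide)
      norm_num [A0, Matrix.vecHead, Matrix.vecTail] at this
    · have := h 1 (by norm_num [A0, Matrix.vecHead, Matrix.vecTail]) 0 (by decide)
      norm_num [A0, Matrix.vecHead, Matrix.vecTail] at this
  · rintro (h | h)
    · have := h 2 (by (show (0:ℝ) < 1); norm_num) 0 (by decide)
      (change (-1:ℝ) = 0 at this); norm_num at this
    · have := h 3 (by (show (-1:ℝ) < 0); norm_num) 0 (by decide)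
      (change (-1:ℝ) = 0 at this); norm_num at this

theorem stmt0 : (∀ j, ¬ CanElim A0 j) ∧ ¬ HasEO A0 := by
  refine ⟨noElim, ?_⟩
  rintro ⟨σ, hσ⟩
  have h := hσ 0
  have he : (Finset.univ.filter (fun t' => t' < (0 : Fin 3))).image σ = ∅ := by
    simp [Finset.filter_eq_empty_iff]
  rw [he, elimCols_empty] at h
  exact noElim (σ 0) h
end

section
/- Let A be the 4×3 matrix with rows (1,1,0), (1,-1,0), (-1,0,1), (-1,0,-1), let d be a positive integer, D = {0,1,...,d}, and let b ∈ ℝ^4. Then for any s,t ∈ D^3 with As ≥ b, At ≥ b, and s_1 ≥ t_1, the vectors u¹ = (s_1,t_2,s_3) and u² = (t_1,t_2,s_3) also satisfy Au¹ ≥ b and Au² ≥ b. In particular the solution graph of (A,b) is connected. -/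
open Finset

lemma feas_A0_iff (d : ℕ) (b : Fin 4 → ℝ) (x : Fin 3 → ℤ) :
    Feas d A0 b x ↔ InD d x ∧
      b 0 ≤ (x 0 : ℝ) + x 1 ∧ b 1 ≤ (x 0 : ℝ) - x 1 ∧
      b 2 ≤ -(x 0 : ℝ) + x 2 ∧ b 3 ≤ -(x 0 : ℝ) - x 2 := by
  constructor
  · rintro ⟨h1, h2⟩
    refine ⟨h1, ?_, ?_, ?_, ?_⟩
    · have := h2 0; simp [A0, Fin.sum_univ_three] at this; linarith
    · have := h2 1; simp [A0, Fin.sum_univ_three] at this; linarith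
    · have := h2 2; simp [A0, Fin.sum_univ_three] at this; linarith
    · have := h2 3; simp [A0, Fin.sum_univ_three] at this; linarith
  · rintro ⟨h1, h2, h3, h4, h5⟩
    refine ⟨h1, fun i => ?_⟩
    fin_cases i <;> simp [A0, Fin.sum_univ_three] <;> linarith

lemma hamming_one {u v : Fin 3 → ℤ} (j : Fin 3) (hj : u j ≠ v j)
    (h : ∀ k, k ≠ j → u k = v k) : hammingDist u v = 1 := by
  have : (Finset.univ.filter fun k => u k ≠ v k) = {j} := by
    ext k
    simp only [Finset.mem_filter, Finset.mem_univ, true_and, Finset.mem_singleton]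
    constructor
    · intro hk; by_contra hkj; exact hk (h k hkj)
    · rintro rfl; exact hj
  simp [hammingDist, this]

lemma step_or_refl {d : ℕ} {b : Fin 4 → ℝ} {u v : Fin 3 → ℤ}
    (hu : Feas d A0 b u) (hv : Feas d A0 b v) (j : Fin 3)
    (h : ∀ k, k ≠ j → u k = v k) :
    Relation.ReflTransGen (SolStep d A0 b) u v := by
  by_cases hj : u j = v j
  · have : u = v := funext fun k => by
      by_cases hk : k = j
      · subst hk; exact hj
      · exact h k hk
    subst this; exact Relation.ReflTransGen.refl
  · exact Relation.ReflTransGen.single ⟨hu, hv, hamming_one j hj h⟩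

theorem stmt1 (d : ℕ) (hd : 0 < d) (b : Fin 4 → ℝ) :
    (∀ s t : Fin 3 → ℤ, Feas d A0 b s → Feas d A0 b t → t 0 ≤ s 0 →
      Feas d A0 b ![s 0, t 1, s 2] ∧ Feas d A0 b ![t 0, t 1, s 2]) ∧
    SolConnected d A0 b := by
  have key : ∀ s t : Fin 3 → ℤ, Feas d A0 b s → Feas d A0 b t → t 0 ≤ s 0 →
      Feas d A0 b ![s 0, t 1, s 2] ∧ Feas d A0 b ![t 0, t 1, s 2] := by
    intro s t hs ht hts
    rw [feas_A0_iff] at hs ht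
    obtain ⟨hsD, hs1, hs2, hs3, hs4⟩ := hs
    obtain ⟨htD, ht1, ht2, ht3, ht4⟩ := ht
    have hts' : (t 0 : ℝ) ≤ (s 0 : ℝ) := by exact_mod_cast hts
    constructor
    · rw [feas_A0_iff]
      refine ⟨fun j => ?_, ?_, ?_, ?_, ?_⟩
      · fin_cases j <;> simp <;> [exact hsD 0; exact htD 1; exact hsD 2]
      all_goals simp; linarith
    · rw [feas_A0_iff]
      refine ⟨fun j => ?_, ?_, ?_, ?_, ?_⟩
      · fin_cases j <;> simp <;> [exact htD 0; exact htD 1; exact hsD 2]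
      all_goals simp; linarith
  refine ⟨key, ?_⟩
  have symm : Symmetric (SolStep d A0 b) := by
    rintro u v ⟨h1, h2, h3⟩
    exact ⟨h2, h1, by rwa [hammingDist_comm]⟩
  have main : ∀ s t : Fin 3 → ℤ, Feas d A0 b s → Feas d A0 b t → t 0 ≤ s 0 →
      Relation.ReflTransGen (SolStep d A0 b) s t := by
    intro s t hs ht hts
    obtain ⟨hu1, hu2⟩ := key s t hs ht hts
    have p1 : Relation.ReflTransGen (SolStep d A0 b) s ![s 0, t 1, s 2] := by
      apply step_or_refl hs hu1 1
      intro k hk; fin_cases k <;> simp_all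
    have p2 : Relation.ReflTransGen (SolStep d A0 b) ![s 0, t 1, s 2] ![t 0, t 1, s 2] := by
      apply step_or_refl hu1 hu2 0
      intro k hk; fin_cases k <;> simp_all
    have p3 : Relation.ReflTransGen (SolStep d A0 b) ![t 0, t 1, s 2] t := by
      apply step_or_refl hu2 ht 2
      intro k hk; fin_cases k <;> simp_all
    exact (p1.trans p2).trans p3
  intro x y hx hy
  rcases le_total (y 0) (x 0) with h | h
  · exact main x y hx hy h
  · exact (@Relation.ReflTransGen.stdSymm _ _ ⟨fun _ _ h => symm h⟩).symm _ _ (main y x hy hx h)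
end

section
/- For every m ≥ 4 and n ≥ 3 there exists a matrix A ∈ ℝ^{m×n} such that A has no elimination ordering, and yet for every vector b ∈ ℝ^m the solution graph of the integer linear system (A,b) over D = {0,...,d} is connected. -/
open Finset

/-! ### Auxiliary construction -/

/-- The counterexample matrix: rows `(-1,-1,0), (-1,1,0), (1,0,-1), (1,0,1)` on the
first three columns, all other entries `0`. -/
noncomputable def myA (m n : ℕ) : Matrix (Fin m) (Fin n) ℝ := fun i j =>
  if i.1 = 0 then (if j.1 = 0 then -1 else if j.1 = 1 then -1 else 0)
  else if i.1 = 1 then (if j.1 = 0 then -1 else if j.1 = 1 then 1 else 0)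
  else if i.1 = 2 then (if j.1 = 0 then 1 else if j.1 = 2 then -1 else 0)
  else if i.1 = 3 then (if j.1 = 0 then 1 else if j.1 = 2 then 1 else 0)
  else 0

lemma sum_two_support {n : ℕ} (u v : Fin n) (huv : u ≠ v) (f : Fin n → ℝ)
    (hf : ∀ j, f j = (if j = u then f u else 0) + (if j = v then f v else 0)) :
    ∑ j, f j = f u + f v := by
  calc ∑ j, f j = ∑ j, ((if j = u then f u else 0) + (if j = v then f v else 0)) :=
        Finset.sum_congr rfl fun j _ => hf j
    _ = _ := by
        rw [Finset.sum_add_distrib, Finset.sum_ite_eq' Finset.univ u (fun _ => f u),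
          Finset.sum_ite_eq' Finset.univ v (fun _ => f v)]
        simp

lemma myA_sum {m n : ℕ} (c0 c1 c2 : Fin n) (h0 : c0.1 = 0) (h1 : c1.1 = 1) (h2 : c2.1 = 2)
    (i : Fin m) (x : Fin n → ℤ) :
    ∑ j, myA m n i j * (x j : ℝ) =
      if i.1 = 0 then -(x c0 : ℝ) - (x c1 : ℝ)
      else if i.1 = 1 then -(x c0 : ℝ) + (x c1 : ℝ)
      else if i.1 = 2 then (x c0 : ℝ) - (x c2 : ℝ)
      else if i.1 = 3 then (x c0 : ℝ) + (x c2 : ℝ)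
      else 0 := by
  have e01 : c0 ≠ c1 := fun h => by rw [h, h1] at h0; exact absurd h0 (by norm_num)
  have e02 : c0 ≠ c2 := fun h => by rw [h, h2] at h0; exact absurd h0 (by norm_num)
  have key : ∀ (u v : Fin n), u ≠ v →
      (∀ j : Fin n, j ≠ u → j ≠ v → myA m n i j = 0) →
      ∑ j, myA m n i j * (x j : ℝ) = myA m n i u * (x u : ℝ) + myA m n i v * (x v : ℝ) := by
    intro u v huv hz
    apply sum_two_support u v huv
    intro j
    by_cases hju : j = u
    · subst hju; simp [huv]
    · by_cases hjv : j = v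
      · subst hjv; simp [Ne.symm huv]
      · simp [hju, hjv, hz j hju hjv]
  split_ifs with g0 g1 g2 g3
  · rw [key c0 c1 e01 ?_]
    · norm_num [myA, g0, h0, h1]; ring
    · intro j hju hjv
      have j0 : j.1 ≠ 0 := fun h => hju (Fin.ext (by rw [h, h0]))
      have j1 : j.1 ≠ 1 := fun h => hjv (Fin.ext (by rw [h, h1]))
      simp [myA, g0, j0, j1]
  · rw [key c0 c1 e01 ?_]
    · norm_num [myA, g0, g1, h0, h1]
    · intro j hju hjv
      have j0 : j.1 ≠ 0 := fun h => hju (Fin.ext (by rw [h, h0]))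
      have j1 : j.1 ≠ 1 := fun h => hjv (Fin.ext (by rw [h, h1]))
      simp [myA, g0, g1, j0, j1]
  · rw [key c0 c2 e02 ?_]
    · norm_num [myA, g0, g1, g2, h0, h2]; ring
    · intro j hju hjv
      have j0 : j.1 ≠ 0 := fun h => hju (Fin.ext (by rw [h, h0]))
      have j2 : j.1 ≠ 2 := fun h => hjv (Fin.ext (by rw [h, h2]))
      simp [myA, g0, g1, g2, j0, j2]
  · rw [key c0 c2 e02 ?_]
    · norm_num [myA, g0, g1, g2, g3, h0, h2]
    · intro j hju hjv
      have j0 : j.1 ≠ 0 := fun h => hju (Fin.ext (by rw [h, h0]))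
      have j2 : j.1 ≠ 2 := fun h => hjv (Fin.ext (by rw [h, h2]))
      simp [myA, g0, g1, g2, g3, j0, j2]
  · have : ∀ j : Fin n, myA m n i j * (x j : ℝ) = 0 := by
      intro j; simp [myA, g0, g1, g2, g3]
    simp [this]

lemma myFeas_iff {d m n : ℕ} (hm : 4 ≤ m) (c0 c1 c2 : Fin n)
    (h0 : c0.1 = 0) (h1 : c1.1 = 1) (h2 : c2.1 = 2) (b : Fin m → ℝ) (x : Fin n → ℤ) :
    Feas d (myA m n) b x ↔ InD d x ∧
      b ⟨0, by omega⟩ ≤ -(x c0 : ℝ) - (x c1 : ℝ) ∧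
      b ⟨1, by omega⟩ ≤ -(x c0 : ℝ) + (x c1 : ℝ) ∧
      b ⟨2, by omega⟩ ≤ (x c0 : ℝ) - (x c2 : ℝ) ∧
      b ⟨3, by omega⟩ ≤ (x c0 : ℝ) + (x c2 : ℝ) ∧
      ∀ i : Fin m, 4 ≤ i.1 → b i ≤ 0 := by
  constructor
  · rintro ⟨hD, hr⟩
    refine ⟨hD, ?_, ?_, ?_, ?_, fun i hi => ?_⟩
    · have := hr ⟨0, by omega⟩
      rw [myA_sum c0 c1 c2 h0 h1 h2] at this
      simpa using this
    · have := hr ⟨1, by omega⟩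
      rw [myA_sum c0 c1 c2 h0 h1 h2] at this
      simpa using this
    · have := hr ⟨2, by omega⟩
      rw [myA_sum c0 c1 c2 h0 h1 h2] at this
      simpa using this
    · have := hr ⟨3, by omega⟩
      rw [myA_sum c0 c1 c2 h0 h1 h2] at this
      simpa using this
    · have := hr i
      rw [myA_sum c0 c1 c2 h0 h1 h2] at this
      have n0 : i.1 ≠ 0 := by omega
      have n1 : i.1 ≠ 1 := by omega
      have n2 : i.1 ≠ 2 := by omega
      have n3 : i.1 ≠ 3 := by omega
      simpa [n0, n1, n2, n3] using this
  · rintro ⟨hD, k0, k1, k2, k3, krest⟩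
    refine ⟨hD, fun i => ?_⟩
    rw [myA_sum c0 c1 c2 h0 h1 h2]
    split_ifs with g0 g1 g2 g3
    · have : i = ⟨0, by omega⟩ := Fin.ext g0
      rw [this]; exact k0
    · have : i = ⟨1, by omega⟩ := Fin.ext g1
      rw [this]; exact k1
    · have : i = ⟨2, by omega⟩ := Fin.ext g2
      rw [this]; exact k2
    · have : i = ⟨3, by omega⟩ := Fin.ext g3
      rw [this]; exact k3
    · exact krest i (by omega)

lemma step_update {d m n : ℕ} (A : Matrix (Fin m) (Fin n) ℝ) (b : Fin m → ℝ)
    (x : Fin n → ℤ) (k : Fin n) (v : ℤ)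
    (hx : Feas d A b x) (hv : Feas d A b (Function.update x k v)) :
    Relation.ReflTransGen (SolStep d A b) x (Function.update x k v) := by
  by_cases h : v = x k
  · have : Function.update x k v = x := by
      funext j
      by_cases hj : j = k <;> simp [Function.update_apply, hj, h]
    rw [this]
  · refine Relation.ReflTransGen.single ⟨hx, hv, ?_⟩
    have hset : ({j | x j ≠ Function.update x k v j} : Finset (Fin n)) = {k} := by
      ext j
      have h' : ¬x k = v := fun hh => h hh.symm
      by_cases hj : j = k <;> simp [Function.update_apply, hj, h']
    rw [hammingDist, hset, Finset.card_singleton]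

lemma InD_update {d n : ℕ} (x : Fin n → ℤ) (hx : InD d x) (k : Fin n) (v : ℤ)
    (hv : 0 ≤ v ∧ v ≤ (d : ℤ)) : InD d (Function.update x k v) := by
  intro j
  by_cases hj : j = k
  · simpa [Function.update_apply, hj] using hv
  · simpa [Function.update_apply, hj] using hx j


lemma ne01 {n : ℕ} {c0 c1 : Fin n} (h0 : c0.1 = 0) (h1 : c1.1 = 1) : c0 ≠ c1 :=
  fun h => by rw [h, h1] at h0; exact absurd h0 (by norm_num)

lemma ne02 {n : ℕ} {c0 c2 : Fin n} (h0 : c0.1 = 0) (h2 : c2.1 = 2) : c0 ≠ c2 :=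
  fun h => by rw [h, h2] at h0; exact absurd h0 (by norm_num)

lemma ne12 {n : ℕ} {c1 c2 : Fin n} (h1 : c1.1 = 1) (h2 : c2.1 = 2) : c1 ≠ c2 :=
  fun h => by rw [h, h2] at h1; exact absurd h1 (by norm_num)

/-- Updating a non-core (pad) coordinate preserves feasibility. -/
lemma feas_update_pad {d m n : ℕ} (hm : 4 ≤ m) (c0 c1 c2 : Fin n)
    (h0 : c0.1 = 0) (h1 : c1.1 = 1) (h2 : c2.1 = 2) (b : Fin m → ℝ) (x : Fin n → ℤ) (hx : Feas d (myA m n) b x)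
    (a : Fin n) (ha0 : a ≠ c0) (ha1 : a ≠ c1) (ha2 : a ≠ c2)
    (v : ℤ) (hv : 0 ≤ v ∧ v ≤ (d : ℤ)) :
    Feas d (myA m n) b (Function.update x a v) := by
  obtain ⟨hD, k0, k1, k2, k3, kr⟩ := (myFeas_iff hm c0 c1 c2 h0 h1 h2 b x).1 hx
  refine (myFeas_iff hm c0 c1 c2 h0 h1 h2 b _).2
    ⟨InD_update x hD a v hv, ?_, ?_, ?_, ?_, kr⟩ <;>
    simp only [Function.update_apply, if_neg (Ne.symm ha0), if_neg (Ne.symm ha1),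
      if_neg (Ne.symm ha2)] <;> assumption

/-- Two feasible points with the same hub value and the same pad coordinates are
connected (adjust `c1`, then `c2`). -/
lemma slice_move {d m n : ℕ} (hm : 4 ≤ m) (c0 c1 c2 : Fin n)
    (h0 : c0.1 = 0) (h1 : c1.1 = 1) (h2 : c2.1 = 2) (b : Fin m → ℝ) (x y : Fin n → ℤ)
    (hx : Feas d (myA m n) b x) (hy : Feas d (myA m n) b y)
    (hc0 : x c0 = y c0) (hpad : ∀ j, j ≠ c1 → j ≠ c2 → x j = y j) :
    Relation.ReflTransGen (SolStep d (myA m n) b) x y := by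
  have e01 := ne01 h0 h1
  have e02 := ne02 h0 h2
  have e12 := ne12 h1 h2
  obtain ⟨hDx, k0, k1, k2, k3, kr⟩ := (myFeas_iff hm c0 c1 c2 h0 h1 h2 b x).1 hx
  obtain ⟨hDy, l0, l1, l2, l3, _⟩ := (myFeas_iff hm c0 c1 c2 h0 h1 h2 b y).1 hy
  set z := Function.update x c1 (y c1) with hzdef
  have hz0 : z c0 = x c0 := by simp [hzdef, Function.update_apply, e01]
  have hz1 : z c1 = y c1 := by simp [hzdef]
  have hz2 : z c2 = x c2 := by simp [hzdef, Function.update_apply, Ne.symm e12]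
  have hzF : Feas d (myA m n) b z := by
    refine (myFeas_iff hm c0 c1 c2 h0 h1 h2 b z).2
      ⟨InD_update x hDx c1 (y c1) (hDy c1), ?_, ?_, ?_, ?_, kr⟩
    · rw [hz0, hz1, hc0]; exact l0
    · rw [hz0, hz1, hc0]; exact l1
    · rw [hz0, hz2]; exact k2
    · rw [hz0, hz2]; exact k3
  have hyz : y = Function.update z c2 (y c2) := by
    funext j
    by_cases hj2 : j = c2
    · subst hj2; simp
    · rw [Function.update_apply, if_neg hj2, hzdef, Function.update_apply]
      by_cases hj1 : j = c1
      · subst hj1; simp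
      · rw [if_neg hj1]
        exact (hpad j hj1 hj2).symm
  have s1 := step_update (myA m n) b x c1 (y c1) hx hzF
  have s2 := step_update (myA m n) b z c2 (y c2) hzF (by rw [← hyz]; exact hy)
  rw [← hyz] at s2
  exact s1.trans s2

/-- Descent: if there is a feasible point with a smaller hub value, we can connect
to a feasible point whose hub value is one less, changing only `c0` and `c2`. -/
lemma descend {d m n : ℕ} (hm : 4 ≤ m) (c0 c1 c2 : Fin n)
    (h0 : c0.1 = 0) (h1 : c1.1 = 1) (h2 : c2.1 = 2) (b : Fin m → ℝ) (x w : Fin n → ℤ)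
    (hx : Feas d (myA m n) b x) (hw : Feas d (myA m n) b w) (hlt : w c0 < x c0) :
    ∃ x', Feas d (myA m n) b x' ∧ x' c0 = x c0 - 1 ∧
      (∀ j, j ≠ c0 → j ≠ c2 → x' j = x j) ∧
      Relation.ReflTransGen (SolStep d (myA m n) b) x x' := by
  have e01 := ne01 h0 h1
  have e02 := ne02 h0 h2
  have e12 := ne12 h1 h2
  obtain ⟨hDx, k0, k1, k2, k3, kr⟩ := (myFeas_iff hm c0 c1 c2 h0 h1 h2 b x).1 hx
  obtain ⟨hDw, l0, l1, l2, l3, _⟩ := (myFeas_iff hm c0 c1 c2 h0 h1 h2 b w).1 hw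
  have hwx : (w c0 : ℝ) ≤ (x c0 : ℝ) - 1 := by
    have : w c0 ≤ x c0 - 1 := by omega
    calc (w c0 : ℝ) ≤ ((x c0 - 1 : ℤ) : ℝ) := by exact_mod_cast this
      _ = (x c0 : ℝ) - 1 := by push_cast; ring
  set z := Function.update x c2 (w c2) with hzdef
  have hz0 : z c0 = x c0 := by simp [hzdef, Function.update_apply, e02]
  have hz1 : z c1 = x c1 := by simp [hzdef, Function.update_apply, e12]
  have hz2 : z c2 = w c2 := by simp [hzdef]
  have hzF : Feas d (myA m n) b z := by
    refine (myFeas_iff hm c0 c1 c2 h0 h1 h2 b z).2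
      ⟨InD_update x hDx c2 (w c2) (hDw c2), ?_, ?_, ?_, ?_, kr⟩
    · rw [hz0, hz1]; exact k0
    · rw [hz0, hz1]; exact k1
    · rw [hz0, hz2]; linarith
    · rw [hz0, hz2]; linarith
  set x' := Function.update z c0 (x c0 - 1) with hx'def
  have hx'0 : x' c0 = x c0 - 1 := by simp [hx'def]
  have hx'1 : x' c1 = x c1 := by
    rw [hx'def, Function.update_apply, if_neg (Ne.symm e01)]; exact hz1
  have hx'2 : x' c2 = w c2 := by
    rw [hx'def, Function.update_apply, if_neg (Ne.symm e02)]; exact hz2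
  have hx'cast : (x' c0 : ℝ) = (x c0 : ℝ) - 1 := by rw [hx'0]; push_cast; ring
  have hx'F : Feas d (myA m n) b x' := by
    refine (myFeas_iff hm c0 c1 c2 h0 h1 h2 b x').2
      ⟨?_, ?_, ?_, ?_, ?_, kr⟩
    · refine InD_update z ?_ c0 (x c0 - 1) ?_
      · exact InD_update x hDx c2 (w c2) (hDw c2)
      · have := hDw c0
        have := hDx c0
        omega
    · rw [hx'cast, hx'1]; linarith
    · rw [hx'cast, hx'1]; linarith
    · rw [hx'cast, hx'2]; linarith
    · rw [hx'cast, hx'2]; linarith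
  refine ⟨x', hx'F, hx'0, ?_, ?_⟩
  · intro j hj0 hj2
    rw [hx'def, Function.update_apply, if_neg hj0, hzdef, Function.update_apply, if_neg hj2]
  · exact (step_update (myA m n) b x c2 (w c2) hx hzF).trans
      (step_update (myA m n) b z c0 (x c0 - 1) hzF hx'F)

/-- Iterated descent down to the hub value of a feasible witness. -/
lemma reach {d m n : ℕ} (hm : 4 ≤ m) (c0 c1 c2 : Fin n)
    (h0 : c0.1 = 0) (h1 : c1.1 = 1) (h2 : c2.1 = 2) (b : Fin m → ℝ) : ∀ k : ℕ, ∀ x w : Fin n → ℤ,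
    Feas d (myA m n) b x → Feas d (myA m n) b w → x c0 = w c0 + k →
    ∃ x', Feas d (myA m n) b x' ∧ x' c0 = w c0 ∧
      (∀ j, j ≠ c0 → j ≠ c2 → x' j = x j) ∧
      Relation.ReflTransGen (SolStep d (myA m n) b) x x' := by
  intro k
  induction k with
  | zero =>
      intro x w hx hw hk
      exact ⟨x, hx, by omega, fun _ _ _ => rfl, Relation.ReflTransGen.refl⟩
  | succ k ih =>
      intro x w hx hw hk
      obtain ⟨x1, hx1F, hx10, hx1pad, hp1⟩ :=
        descend hm c0 c1 c2 h0 h1 h2 b x w hx hw (by omega)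
      obtain ⟨x', hx'F, hx'0, hx'pad, hp2⟩ := ih x1 w hx1F hw (by omega)
      exact ⟨x', hx'F, hx'0,
        fun j hj0 hj2 => (hx'pad j hj0 hj2).trans (hx1pad j hj0 hj2), hp1.trans hp2⟩

/-- Align all pad coordinates of `x` with those of `y`. -/
lemma pad_align {d m n : ℕ} (hm : 4 ≤ m) (c0 c1 c2 : Fin n)
    (h0 : c0.1 = 0) (h1 : c1.1 = 1) (h2 : c2.1 = 2) (b : Fin m → ℝ) (x y : Fin n → ℤ)
    (hx : Feas d (myA m n) b x) (hy : Feas d (myA m n) b y) :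
    ∀ S : Finset (Fin n), (∀ j ∈ S, j ≠ c0 ∧ j ≠ c1 ∧ j ≠ c2) →
    ∃ x', Feas d (myA m n) b x' ∧ (∀ j ∈ S, x' j = y j) ∧ (∀ j ∉ S, x' j = x j) ∧
      Relation.ReflTransGen (SolStep d (myA m n) b) x x' := by
  intro S
  induction S using Finset.induction_on with
  | empty =>
      intro _
      exact ⟨x, hx, by simp, fun _ _ => rfl, Relation.ReflTransGen.refl⟩
  | @insert a S ha ih =>
      intro hS
      obtain ⟨x1, hx1F, hin, hout, hp⟩ := ih fun j hj => hS j (Finset.mem_insert_of_mem hj)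
      obtain ⟨ha0, ha1, ha2⟩ := hS a (Finset.mem_insert_self a S)
      have hx2F : Feas d (myA m n) b (Function.update x1 a (y a)) :=
        feas_update_pad hm c0 c1 c2 h0 h1 h2 b x1 hx1F a ha0 ha1 ha2 (y a) (hy.1 a)
      refine ⟨Function.update x1 a (y a), hx2F, ?_, ?_, ?_⟩
      · intro j hj
        rcases Finset.mem_insert.1 hj with rfl | hjS
        · simp
        · have : j ≠ a := fun h => ha (h ▸ hjS)
          rw [Function.update_apply, if_neg this]; exact hin j hjS
      · intro j hj
        have hja : j ≠ a := fun h => hj (h ▸ Finset.mem_insert_self a S)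
        have hjS : j ∉ S := fun h => hj (Finset.mem_insert_of_mem h)
        rw [Function.update_apply, if_neg hja]; exact hout j hjS
      · exact hp.trans (step_update (myA m n) b x1 a (y a) hx1F hx2F)


theorem stmt2 (d : ℕ) (hd : 0 < d) (m n : ℕ) (hm : 4 ≤ m) (hn : 3 ≤ n) :
    ∃ A : Matrix (Fin m) (Fin n) ℝ, ¬ HasEO A ∧ ∀ b : Fin m → ℝ, SolConnected d A b := by
  obtain ⟨c0, h0⟩ : ∃ c : Fin n, c.1 = 0 := ⟨⟨0, by omega⟩, rfl⟩
  obtain ⟨c1, h1⟩ : ∃ c : Fin n, c.1 = 1 := ⟨⟨1, by omega⟩, rfl⟩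
  obtain ⟨c2, h2⟩ : ∃ c : Fin n, c.1 = 2 := ⟨⟨2, by omega⟩, rfl⟩
  refine ⟨myA m n, ?_, ?_⟩
  · rintro ⟨σ, H⟩
    set t0 := σ.symm c0 with ht0
    set t1 := σ.symm c1 with ht1
    set t2 := σ.symm c2 with ht2
    set t := min (min t0 t1) t2 with ht
    set J := (Finset.univ.filter (fun t' => t' < t)).image σ with hJdef
    have htle0 : t ≤ t0 := le_trans (min_le_left _ _) (min_le_left _ _)
    have htle1 : t ≤ t1 := le_trans (min_le_left _ _) (min_le_right _ _)
    have htle2 : t ≤ t2 := min_le_right _ _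
    have hJ : ∀ k : Fin n, k = c0 ∨ k = c1 ∨ k = c2 → k ∉ J := by
      rintro k hk hmem
      obtain ⟨t', ht', hσt'⟩ := Finset.mem_image.1 hmem
      have hlt : t' < t := (Finset.mem_filter.1 ht').2
      have ht'eq : t' = σ.symm k := by rw [← hσt', Equiv.symm_apply_apply]
      rcases hk with rfl | rfl | rfl
      · rw [ht'eq, ← ht0] at hlt; exact absurd hlt (not_lt.2 htle0)
      · rw [ht'eq, ← ht1] at hlt; exact absurd hlt (not_lt.2 htle1)
      · rw [ht'eq, ← ht2] at hlt; exact absurd hlt (not_lt.2 htle2)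
    have hE : ∀ (i : Fin m) (k : Fin n), k = c0 ∨ k = c1 ∨ k = c2 →
        elimCols (myA m n) J i k = myA m n i k := by
      intro i k hk
      show (if k ∈ J then 0 else myA m n i k) = myA m n i k
      rw [if_neg (hJ k hk)]
    have hσt : σ t = c0 ∨ σ t = c1 ∨ σ t = c2 := by
      have htt : t = t0 ∨ t = t1 ∨ t = t2 := by
        rcases min_cases (min t0 t1) t2 with ⟨h, _⟩ | ⟨h, _⟩
        · rcases min_cases t0 t1 with ⟨h', _⟩ | ⟨h', _⟩
          · left; rw [ht, h, h']
          · right; left; rw [ht, h, h']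
        · right; right; rw [ht, h]
      rcases htt with h | h | h
      · left; rw [h, ht0, Equiv.apply_symm_apply]
      · right; left; rw [h, ht1, Equiv.apply_symm_apply]
      · right; right; rw [h, ht2, Equiv.apply_symm_apply]
    have Hc := H t
    rw [← hJdef] at Hc
    rcases hσt with hs | hs | hs <;> rw [hs] at Hc
    · rcases Hc with Hc | Hc
      · have h := Hc ⟨2, by omega⟩
          (by rw [hE _ _ (Or.inl rfl)]; norm_num [myA, h0]) c2 ((ne02 h0 h2).symm)
        rw [hE _ _ (Or.inr (Or.inr rfl))] at h
        norm_num [myA, h2] at h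
      · have h := Hc ⟨0, by omega⟩
          (by rw [hE _ _ (Or.inl rfl)]; norm_num [myA, h0]) c1 ((ne01 h0 h1).symm)
        rw [hE _ _ (Or.inr (Or.inl rfl))] at h
        norm_num [myA, h1] at h
    · rcases Hc with Hc | Hc
      · have h := Hc ⟨1, by omega⟩
          (by rw [hE _ _ (Or.inr (Or.inl rfl))]; norm_num [myA, h1]) c0 (ne01 h0 h1)
        rw [hE _ _ (Or.inl rfl)] at h
        norm_num [myA, h0] at h
      · have h := Hc ⟨0, by omega⟩
          (by rw [hE _ _ (Or.inr (Or.inl rfl))]; norm_num [myA, h1]) c0 (ne01 h0 h1)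
        rw [hE _ _ (Or.inl rfl)] at h
        norm_num [myA, h0] at h
    · rcases Hc with Hc | Hc
      · have h := Hc ⟨3, by omega⟩
          (by rw [hE _ _ (Or.inr (Or.inr rfl))]; norm_num [myA, h2]) c0 (ne02 h0 h2)
        rw [hE _ _ (Or.inl rfl)] at h
        norm_num [myA, h0] at h
      · have h := Hc ⟨2, by omega⟩
          (by rw [hE _ _ (Or.inr (Or.inr rfl))]; norm_num [myA, h2]) c0 (ne02 h0 h2)
        rw [hE _ _ (Or.inl rfl)] at h
        norm_num [myA, h0] at h
  · intro b x y hx hy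
    have symmStep : Symmetric (SolStep d (myA m n) b) := by
      rintro u v ⟨hu, hv, hdist⟩
      exact ⟨hv, hu, by rwa [hammingDist_comm]⟩
    obtain ⟨x1, hx1F, hin, hout, hp1⟩ :=
      pad_align hm c0 c1 c2 h0 h1 h2 b x y hx hy
        (Finset.univ.filter fun j => j ≠ c0 ∧ j ≠ c1 ∧ j ≠ c2)
        (fun j hj => (Finset.mem_filter.1 hj).2)
    have hx1pads : ∀ j, j ≠ c0 → j ≠ c1 → j ≠ c2 → x1 j = y j := fun j hj0 hj1 hj2 =>
      hin j (Finset.mem_filter.2 ⟨Finset.mem_univ j, hj0, hj1, hj2⟩)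
    rcases le_or_gt (y c0) (x1 c0) with hle | hlt
    · obtain ⟨x2, hx2F, hx20, hx2pad, hp2⟩ :=
        reach hm c0 c1 c2 h0 h1 h2 b ((x1 c0 - y c0).toNat) x1 y hx1F hy (by omega)
      have hp3 : Relation.ReflTransGen (SolStep d (myA m n) b) x2 y := by
        refine slice_move hm c0 c1 c2 h0 h1 h2 b x2 y hx2F hy hx20 ?_
        intro j hj1 hj2
        by_cases hj0 : j = c0
        · subst hj0; exact hx20
        · exact (hx2pad j hj0 hj2).trans (hx1pads j hj0 hj1 hj2)
      exact (hp1.trans hp2).trans hp3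
    · obtain ⟨y2, hy2F, hy20, hy2pad, hp2⟩ :=
        reach hm c0 c1 c2 h0 h1 h2 b ((y c0 - x1 c0).toNat) y x1 hy hx1F (by omega)
      have hp3 : Relation.ReflTransGen (SolStep d (myA m n) b) x1 y2 := by
        refine slice_move hm c0 c1 c2 h0 h1 h2 b x1 y2 hx1F hy2F hy20.symm ?_
        intro j hj1 hj2
        by_cases hj0 : j = c0
        · subst hj0; exact hy20.symm
        · exact (hx1pads j hj0 hj1 hj2).trans (hy2pad j hj0 hj2).symm
      exact (hp1.trans hp3).trans (@Std.Symm.symm _ _ (@Relation.ReflTransGen.stdSymm _ _ ⟨symmStep⟩) _ _ hp2)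
end

section
/- Let A ∈ ℝ^{2×n} (n ≥ 1) be a matrix that cannot be eliminated at any column, and fix a positive integer d. Then there exists b ∈ ℝ^2 such that the solution graph of the integer linear system (A,b) over D = {0,...,d} is not connected: in fact there are two distinct feasible solutions p,q such that every vector at Hamming distance 1 from q is infeasible. -/
open Finset

section MyAux

/-- difference of weighted sums when the vectors differ in at most one coordinate -/
lemma my_sum_sub_single {R : Type*} [CommRing R] {n : ℕ} (c p q : Fin n → R) (j : Fin n)
    (h : ∀ j', j' ≠ j → p j' = q j') :
    (∑ j', c j' * p j') - (∑ j', c j' * q j') = c j * (p j - q j) := by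
  rw [← Finset.sum_sub_distrib, Finset.sum_eq_single j]
  · ring
  · intro j' _ hj'; rw [h j' hj']; ring
  · intro hj; exact absurd (Finset.mem_univ j) hj

/-- the value of a row of the system at an integer point -/
def vRow {n : ℕ} (A : Matrix (Fin 2) (Fin n) ℝ) (i : Fin 2) (x : Fin n → ℤ) : ℝ :=
  ∑ j, A i j * (x j : ℝ)

lemma vRow_sub_single {n : ℕ} (A : Matrix (Fin 2) (Fin n) ℝ) (i : Fin 2)
    (p q : Fin n → ℤ) (j : Fin n) (h : ∀ j', j' ≠ j → p j' = q j') :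
    vRow A i p - vRow A i q = A i j * ((p j : ℝ) - (q j : ℝ)) :=
  my_sum_sub_single (fun j' => A i j') (fun j' => (p j' : ℝ)) (fun j' => (q j' : ℝ)) j
    (fun j' hj' => by simp [h j' hj'])

lemma my_ham_one {n : ℕ} {p q : Fin n → ℤ} (h : hammingDist p q = 1) :
    ∃ j, p j ≠ q j ∧ ∀ j', j' ≠ j → p j' = q j' := by
  rw [hammingDist] at h
  obtain ⟨j, hj⟩ := Finset.card_eq_one.mp h
  refine ⟨j, ?_, ?_⟩
  · have : j ∈ Finset.univ.filter fun j => p j ≠ q j := hj ▸ Finset.mem_singleton_self j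
    exact (Finset.mem_filter.mp this).2
  · intro j' hj'
    by_contra hne
    have : j' ∈ Finset.univ.filter fun j => p j ≠ q j :=
      Finset.mem_filter.mpr ⟨Finset.mem_univ _, hne⟩
    rw [hj] at this
    exact hj' (Finset.mem_singleton.mp this)

lemma my_ham_two {n : ℕ} {p q : Fin n → ℤ} {j k : Fin n} (hjk : j ≠ k)
    (hj : p j ≠ q j) (hk : p k ≠ q k) : hammingDist p q ≠ 1 := by
  rw [hammingDist]
  have hsub : ({j, k} : Finset (Fin n)) ⊆ Finset.univ.filter fun i => p i ≠ q i := by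
    intro a ha
    rcases Finset.mem_insert.mp ha with rfl | ha
    · exact Finset.mem_filter.mpr ⟨Finset.mem_univ _, hj⟩
    · rw [Finset.mem_singleton.mp ha]
      exact Finset.mem_filter.mpr ⟨Finset.mem_univ _, hk⟩
  have h2 : ({j, k} : Finset (Fin n)).card = 2 := by
    rw [Finset.card_insert_of_notMem (by simpa using hjk), Finset.card_singleton]
  have := Finset.card_le_card hsub
  omega

lemma my_ham_le_one {n : ℕ} {p q : Fin n → ℤ} (j : Fin n)
    (h : ∀ j', j' ≠ j → p j' = q j') : hammingDist p q ≤ 1 := by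
  rw [hammingDist]
  have hsub : (Finset.univ.filter fun i => p i ≠ q i) ⊆ {j} := by
    intro a ha
    rw [Finset.mem_singleton]
    by_contra hne
    exact (Finset.mem_filter.mp ha).2 (h a hne)
  simpa using Finset.card_le_card hsub

lemma my_key_lt : ∀ n : ℕ, 2 ≤ n → ∀ d : ℕ, 1 ≤ d → n * d + 1 < (d + 1) ^ n := by
  intro n hn
  induction n with
  | zero => omega
  | succ m ih =>
    intro d hd
    rcases Nat.lt_or_ge m 2 with hm | hm
    · interval_cases m
      · omega
      · simp only [pow_succ, pow_one]
        nlinarith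
    · have h1 := ih (by omega) d hd
      have h2 : (d + 1) ^ (m + 1) = (d + 1) ^ m * (d + 1) := pow_succ _ _
      have h3 : (m * d + 2) * (d + 1) ≤ (d + 1) ^ m * (d + 1) :=
        Nat.mul_le_mul_right _ (by omega)
      have h5 : d * 1 ≤ d * (m * d) := Nat.mul_le_mul_left d (by nlinarith)
      have h4 : (m + 1) * d + 2 ≤ (m * d + 2) * (d + 1) := by nlinarith [h5]
      omega

lemma my_fin2 (i : Fin 2) : i = 0 ∨ i = 1 := by
  revert i; decide

lemma my_signs {n : ℕ} {A : Matrix (Fin 2) (Fin n) ℝ} {j : Fin n} (h : ¬ CanElim A j) :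
    (0 < A 0 j ∧ A 1 j < 0) ∨ (A 0 j < 0 ∧ 0 < A 1 j) := by
  rw [CanElim] at h
  push_neg at h
  obtain ⟨h1, h2⟩ := h
  obtain ⟨i1, hi1, _, _, _⟩ := h1
  obtain ⟨i2, hi2, _, _, _⟩ := h2
  rcases my_fin2 i1 with rfl | rfl <;> rcases my_fin2 i2 with rfl | rfl
  · linarith
  · exact Or.inl ⟨hi1, hi2⟩
  · exact Or.inr ⟨hi2, hi1⟩
  · linarith

lemma my_epilogue (d : ℕ) {n : ℕ} (A : Matrix (Fin 2) (Fin n) ℝ) (b : Fin 2 → ℝ)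
    {p q : Fin n → ℤ} (hp : Feas d A b p) (hq : Feas d A b q) (hpq : p ≠ q)
    (hiso : ∀ y, InD d y → hammingDist q y = 1 → ¬ Feas d A b y) :
    ¬ SolConnected d A b := by
  intro hc
  rcases (hc p q hp hq).cases_tail with heq | ⟨c, _, hstep⟩
  · exact hpq heq.symm
  · exact hiso c hstep.1.1 ((hammingDist_comm q c).trans hstep.2.2) hstep.1

end MyAux

theorem stmt4 (d : ℕ) (hd : 0 < d) (n : ℕ) (hn : 1 ≤ n)
    (A : Matrix (Fin 2) (Fin n) ℝ) (h : ∀ j, ¬ CanElim A j) :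
    ∃ b : Fin 2 → ℝ, ∃ p q : Fin n → ℤ, Feas d A b p ∧ Feas d A b q ∧ p ≠ q ∧
      (∀ y : Fin n → ℤ, InD d y → hammingDist q y = 1 → ¬ Feas d A b y) ∧
      ¬ SolConnected d A b := by
  classical
  have hsgn : ∀ j, (0 < A 0 j ∧ A 1 j < 0) ∨ (A 0 j < 0 ∧ 0 < A 1 j) := fun j => my_signs (h j)
  have hn2 : 2 ≤ n := by
    have h0 := h ⟨0, hn⟩
    rw [CanElim] at h0; push_neg at h0
    obtain ⟨⟨i1, _, j', hj', _⟩, _⟩ := h0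
    have : 1 < Fintype.card (Fin n) := Fintype.one_lt_card_iff.mpr ⟨j', ⟨0, hn⟩, hj'⟩
    simp at this; omega
  by_cases hcomp : ∃ p q : Fin n → ℤ, InD d p ∧ InD d q ∧ p ≠ q ∧ ∀ i, vRow A i q ≤ vRow A i p
  · -- a comparable pair exists
    obtain ⟨p, q, hp, hq, hpq, hle⟩ := hcomp
    have hiso : ∀ y, InD d y → hammingDist q y = 1 →
        ¬ Feas d A (fun i => vRow A i q) y := by
      intro y hy hham hfeas
      obtain ⟨j0, hne, hagree⟩ := my_ham_one hham
      have hv : ∀ i, vRow A i q - vRow A i y = A i j0 * ((q j0 : ℝ) - (y j0 : ℝ)) :=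
        fun i => vRow_sub_single A i q y j0 hagree
      have hδ : ((q j0 : ℝ)) ≠ ((y j0 : ℝ)) := by exact_mod_cast hne
      have hpos : ∃ i, 0 < A i j0 * ((q j0 : ℝ) - (y j0 : ℝ)) := by
        rcases hsgn j0 with ⟨h0, h1⟩ | ⟨h0, h1⟩ <;> rcases lt_or_gt_of_ne hδ with hlt | hgt
        · exact ⟨1, mul_pos_of_neg_of_neg h1 (by linarith)⟩
        · exact ⟨0, mul_pos h0 (by linarith)⟩
        · exact ⟨0, mul_pos_of_neg_of_neg h0 (by linarith)⟩
        · exact ⟨1, mul_pos h1 (by linarith)⟩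
      obtain ⟨i, hipos⟩ := hpos
      have hfy : vRow A i q ≤ vRow A i y := hfeas.2 i
      have := hv i
      linarith
    have hfp : Feas d A (fun i => vRow A i q) p := ⟨hp, fun i => hle i⟩
    have hfq : Feas d A (fun i => vRow A i q) q := ⟨hq, fun i => le_refl _⟩
    exact ⟨_, p, q, hfp, hfq, hpq, hiso, my_epilogue d A _ hfp hfq hpq hiso⟩
  · -- no comparable pair: strict antichain case
    push_neg at hcomp
    have hinj : ∀ p q, InD d p → InD d q → vRow A 0 p = vRow A 0 q → p = q := by
      intro p q hp hq hv
      by_contra hne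
      obtain ⟨i1, hi1⟩ := hcomp p q hp hq hne
      obtain ⟨i2, hi2⟩ := hcomp q p hq hp (Ne.symm hne)
      rcases my_fin2 i1 with rfl | rfl <;> rcases my_fin2 i2 with rfl | rfl <;> linarith
    -- the box of integer points
    set B : Finset (Fin n → ℤ) := Fintype.piFinset (fun _ : Fin n => Finset.Icc (0:ℤ) (d:ℤ))
      with hB
    have hmemB : ∀ x : Fin n → ℤ, x ∈ B ↔ InD d x := by
      intro x
      simp [hB, InD, Fintype.mem_piFinset, Finset.mem_Icc]
    have hBcard : B.card = (d+1)^n := by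
      rw [hB, Fintype.card_piFinset]
      have hc : (Finset.Icc (0:ℤ) (d:ℤ)).card = d + 1 := by
        rw [Int.card_Icc]
        omega
      simp [hc]
    -- the signed weight
    have hpigeon : ∃ x0 ∈ B, ∃ y0 ∈ B, x0 ≠ y0 ∧
        (∑ j, (if 0 < A 0 j then (1:ℤ) else -1) * x0 j)
          = ∑ j, (if 0 < A 0 j then (1:ℤ) else -1) * y0 j := by
      apply Finset.exists_ne_map_eq_of_card_lt_of_maps_to (t := Finset.Icc
        (∑ j, (if 0 < A 0 j then (0:ℤ) else -(d:ℤ)))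
        (∑ j, (if 0 < A 0 j then (d:ℤ) else 0)))
      · have hdiff : (∑ j, (if 0 < A 0 j then (d:ℤ) else 0))
            - (∑ j, (if 0 < A 0 j then (0:ℤ) else -(d:ℤ))) = ((n * d : ℕ) : ℤ) := by
          rw [← Finset.sum_sub_distrib]
          have hpt : ∀ j ∈ Finset.univ, ((if 0 < A 0 j then (d:ℤ) else 0)
              - (if 0 < A 0 j then (0:ℤ) else -(d:ℤ))) = (d:ℤ) := by
            intro j _; split_ifs <;> ring
          rw [Finset.sum_congr rfl hpt, Finset.sum_const, Finset.card_univ, Fintype.card_fin]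
          push_cast
          ring
        rw [Int.card_Icc, hBcard]
        have := my_key_lt n hn2 d hd
        omega
      · intro x hx
        have hxD := (hmemB x).mp hx
        simp only [Finset.coe_Icc, Set.mem_Icc]
        constructor
        · refine Finset.sum_le_sum ?_
          intro j _
          by_cases hj : 0 < A 0 j
          · simp only [if_pos hj]
            linarith [(hxD j).1]
          · simp only [if_neg hj]
            linarith [(hxD j).2]
        · refine Finset.sum_le_sum ?_
          intro j _
          by_cases hj : 0 < A 0 j
          · simp only [if_pos hj]
            linarith [(hxD j).2]
          · simp only [if_neg hj]
            linarith [(hxD j).1]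
    obtain ⟨x0, hx0, y0, hy0, hxy0, hweq⟩ := hpigeon
    have hham0 : hammingDist x0 y0 ≠ 1 := by
      intro h1
      obtain ⟨j, hne, hagree⟩ := my_ham_one h1
      have hws := my_sum_sub_single (fun j' => if 0 < A 0 j' then (1:ℤ) else -1) x0 y0 j hagree
      rw [hweq, sub_self] at hws
      have : (if 0 < A 0 j then (1:ℤ) else -1) * (x0 j - y0 j) = 0 := hws.symm
      split_ifs at this <;> omega
    have hvne : vRow A 0 x0 ≠ vRow A 0 y0 :=
      fun he => hxy0 (hinj _ _ ((hmemB _).mp hx0) ((hmemB _).mp hy0) he)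
    -- the set of candidate pairs
    set S : Finset ((Fin n → ℤ) × (Fin n → ℤ)) :=
      (B ×ˢ B).filter (fun pq => pq.1 ≠ pq.2 ∧ hammingDist pq.1 pq.2 ≠ 1 ∧
        vRow A 0 pq.2 < vRow A 0 pq.1) with hS
    have hmemS : ∀ pq : (Fin n → ℤ) × (Fin n → ℤ), pq ∈ S ↔
        (InD d pq.1 ∧ InD d pq.2 ∧ pq.1 ≠ pq.2 ∧ hammingDist pq.1 pq.2 ≠ 1 ∧
          vRow A 0 pq.2 < vRow A 0 pq.1) := by
      intro pq
      rw [hS, Finset.mem_filter, Finset.mem_product, hmemB, hmemB]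
      tauto
    have hSne : S.Nonempty := by
      rcases lt_or_gt_of_ne hvne with hlt | hgt
      · exact ⟨(y0, x0), (hmemS _).mpr ⟨(hmemB _).mp hy0, (hmemB _).mp hx0, Ne.symm hxy0,
          by rw [hammingDist_comm]; exact hham0, hlt⟩⟩
      · exact ⟨(x0, y0), (hmemS _).mpr ⟨(hmemB _).mp hx0, (hmemB _).mp hy0, hxy0, hham0, hgt⟩⟩
    obtain ⟨⟨x, y⟩, hxyS, hmin⟩ :=
      Finset.exists_min_image S (fun pq => vRow A 0 pq.1 - vRow A 0 pq.2) hSne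
    obtain ⟨hxD, hyD, hxny, hhamxy, hvyx⟩ := (hmemS _).mp hxyS
    dsimp only at hxD hyD hxny hhamxy hvyx hmin
    have hv1xy : vRow A 1 x < vRow A 1 y := by
      obtain ⟨i, hi⟩ := hcomp x y hxD hyD hxny
      rcases my_fin2 i with rfl | rfl
      · linarith
      · exact hi
    have hb0 : (![vRow A 0 y, vRow A 1 x] : Fin 2 → ℝ) 0 = vRow A 0 y := rfl
    have hb1 : (![vRow A 0 y, vRow A 1 x] : Fin 2 → ℝ) 1 = vRow A 1 x := rfl
    have hfx : Feas d A ![vRow A 0 y, vRow A 1 x] x := by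
      refine ⟨hxD, ?_⟩
      intro i
      rcases my_fin2 i with rfl | rfl
      · rw [hb0]; exact le_of_lt hvyx
      · rw [hb1]; exact le_refl _
    have hfy : Feas d A ![vRow A 0 y, vRow A 1 x] y := by
      refine ⟨hyD, ?_⟩
      intro i
      rcases my_fin2 i with rfl | rfl
      · rw [hb0]; exact le_refl _
      · rw [hb1]; exact le_of_lt hv1xy
    have hiso : ∀ z, InD d z → hammingDist y z = 1 →
        ¬ Feas d A ![vRow A 0 y, vRow A 1 x] z := by
      intro z hzD hham hfz
      have hzy : z ≠ y := by
        intro he; rw [he, hammingDist_self] at hham; exact one_ne_zero hham.symm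
      have hzx : z ≠ x := by
        intro he
        rw [he, hammingDist_comm] at hham
        exact hhamxy hham
      have hz0 : vRow A 0 y ≤ vRow A 0 z := by
        have := hfz.2 0; rwa [hb0] at this
      have hz1 : vRow A 1 x ≤ vRow A 1 z := by
        have := hfz.2 1; rwa [hb1] at this
      have hzltx : vRow A 0 z < vRow A 0 x := by
        obtain ⟨i, hi⟩ := hcomp z x hzD hxD hzx
        rcases my_fin2 i with rfl | rfl
        · exact hi
        · linarith
      have hyltz : vRow A 0 y < vRow A 0 z :=
        lt_of_le_of_ne hz0 (fun he => hzy (hinj z y hzD hyD he.symm))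
      have hhamxz : hammingDist x z = 1 := by
        by_contra hne1
        have hmem : (x, z) ∈ S := (hmemS _).mpr ⟨hxD, hzD, Ne.symm hzx, hne1, hzltx⟩
        have := hmin _ hmem
        simp only at this
        linarith
      obtain ⟨j, hxj, hxagree⟩ := my_ham_one hhamxz
      obtain ⟨k, hyk, hyagree⟩ := my_ham_one hham
      have hjk : j ≠ k := by
        intro he; subst he
        have hagr : ∀ j', j' ≠ j → x j' = y j' :=
          fun j' hj' => (hxagree j' hj').trans (hyagree j' hj').symm
        have hle1 := my_ham_le_one j hagr
        have hne0 : hammingDist x y ≠ 0 := fun h0 => hxny (hammingDist_eq_zero.mp h0)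
        omega
      set u : Fin n → ℤ := fun j' => if j' = j then x j else if j' = k then y k else z j'
        with hu
      have huj : u j = x j := by simp [hu]
      have huk : u k = y k := by simp [hu, Ne.symm hjk]
      have huelse : ∀ j', j' ≠ j → j' ≠ k → u j' = z j' := by
        intro j' h1 h2; simp [hu, h1, h2]
      have huD : InD d u := by
        intro j'
        rcases eq_or_ne j' j with rfl | h1
        · rw [huj]; exact hxD j'
        rcases eq_or_ne j' k with rfl | h2
        · rw [huk]; exact hyD j'
        · rw [huelse j' h1 h2]; exact hzD j'
      have hunez : u ≠ z := by
        intro he; apply hxj; rw [← huj, he]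
      have huzham : hammingDist u z ≠ 1 :=
        my_ham_two hjk (by rw [huj]; exact hxj) (by rw [huk]; exact hyk)
      have hkey : vRow A 0 u - vRow A 0 z
          = (vRow A 0 x - vRow A 0 z) + (vRow A 0 y - vRow A 0 z) := by
        set m : Fin n → ℤ := fun j' => if j' = j then x j else z j' with hm
        have hmj : m j = x j := by simp [hm]
        have hmelse : ∀ j', j' ≠ j → m j' = z j' := by intro j' h1; simp [hm, h1]
        have h1 : vRow A 0 m - vRow A 0 z = A 0 j * ((x j : ℝ) - (z j : ℝ)) := by
          have := vRow_sub_single A 0 m z j hmelse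
          rwa [hmj] at this
        have h2 : vRow A 0 u - vRow A 0 m = A 0 k * ((y k : ℝ) - (z k : ℝ)) := by
          have hagr : ∀ j', j' ≠ k → u j' = m j' := by
            intro j' hj'
            rcases eq_or_ne j' j with rfl | hj'j
            · rw [huj, hmj]
            · rw [huelse j' hj'j hj', hmelse j' hj'j]
          have := vRow_sub_single A 0 u m k hagr
          rwa [huk, hmelse k (Ne.symm hjk)] at this
        have h3 : vRow A 0 x - vRow A 0 z = A 0 j * ((x j : ℝ) - (z j : ℝ)) :=
          vRow_sub_single A 0 x z j hxagree
        have h4 : vRow A 0 y - vRow A 0 z = A 0 k * ((y k : ℝ) - (z k : ℝ)) :=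
          vRow_sub_single A 0 y z k hyagree
        linarith
      rcases lt_trichotomy (vRow A 0 u) (vRow A 0 z) with hlt | heq | hgt
      · have hmem : (z, u) ∈ S := (hmemS _).mpr ⟨hzD, huD, Ne.symm hunez,
          by rw [hammingDist_comm]; exact huzham, hlt⟩
        have := hmin _ hmem
        simp only at this
        linarith
      · exact hunez (hinj u z huD hzD heq)
      · have hmem : (u, z) ∈ S := (hmemS _).mpr ⟨huD, hzD, hunez, huzham, hgt⟩
        have := hmin _ hmem
        simp only at this
        linarith
    exact ⟨![vRow A 0 y, vRow A 1 x], x, y, hfx, hfy, Ne.symm (fun he => hxny he.symm), hiso,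
      my_epilogue d A _ hfx hfy (Ne.symm (fun he => hxny he.symm)) hiso⟩
end

section
/- Let A ∈ ℝ^{2×n} be a matrix with two rows that has no elimination ordering. Then there exists b ∈ ℝ^2 such that the solution graph of the integer linear system (A,b) over D = {0,...,d} is not connected. -/
open Finset

namespace Stmt5Aux

variable {m n : ℕ}

def Reach (A : Matrix (Fin m) (Fin n) ℝ) (E : Finset (Fin n)) : Prop :=
  ∃ l : List (Fin n), l.Nodup ∧ l.toFinset = E ∧
    ∀ (k : ℕ) (h : k < l.length),
      CanElim (elimCols A (l.take k).toFinset) (l.get ⟨k, h⟩)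

lemma reach_empty (A : Matrix (Fin m) (Fin n) ℝ) : Reach A (∅ : Finset (Fin n)) :=
  ⟨[], List.nodup_nil, by simp, fun k h => absurd h (by simp)⟩

lemma hasEO_of_reach_univ (A : Matrix (Fin m) (Fin n) ℝ)
    (h : Reach A (univ : Finset (Fin n))) : HasEO A := by
  obtain ⟨l, hnd, hto, hcond⟩ := h
  have hlen : l.length = n := by
    have h1 := List.toFinset_card_of_nodup hnd
    rw [hto] at h1
    simpa using h1.symm
  have hinj : Function.Injective fun t : Fin n => l.get (Fin.cast hlen.symm t) :=
    (List.nodup_iff_injective_get.mp hnd).comp (Fin.cast_injective _)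
  refine ⟨Equiv.ofBijective _ (Finite.injective_iff_bijective.mp hinj), ?_⟩
  intro t
  have hset : ((Finset.univ.filter (fun t' => t' < t)).image
      (Equiv.ofBijective _ (Finite.injective_iff_bijective.mp hinj))) = (l.take t).toFinset := by
    ext j
    simp only [Finset.mem_image, Finset.mem_filter, Finset.mem_univ, true_and,
      List.mem_toFinset, Equiv.ofBijective_apply]
    constructor
    · rintro ⟨t', ht', rfl⟩
      apply List.mem_take_iff_getElem.mpr
      exact ⟨t'.val, by omega, by simp [List.get_eq_getElem]⟩
    · intro hj
      obtain ⟨i, hi, hij⟩ := List.mem_take_iff_getElem.mp hj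
      refine ⟨⟨i, by omega⟩, ?_, ?_⟩
      · simp only [Fin.lt_def]; omega
      · simp [List.get_eq_getElem, ← hij]
  rw [hset]
  have := hcond t.val (by omega)
  simpa [List.get_eq_getElem, Equiv.ofBijective_apply] using this

lemma extract (A : Matrix (Fin m) (Fin n) ℝ) (h : ¬ HasEO A) :
    ∃ T : Finset (Fin n), T.Nonempty ∧
      (∀ j ∈ T, ¬ CanElim (elimCols A (univ \ T)) j) ∧
      (∀ j ∉ T, ∃ J : Finset (Fin n), Disjoint J T ∧ j ∉ J ∧ CanElim (elimCols A J) j) := by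
  classical
  have hne : ((univ : Finset (Finset (Fin n))).filter fun E => Reach A E).Nonempty :=
    ⟨∅, by simp [reach_empty]⟩
  obtain ⟨E, hEmem, hEmax⟩ := Finset.exists_max_image _ Finset.card hne
  rw [Finset.mem_filter] at hEmem
  obtain ⟨-, hE⟩ := hEmem
  have hEne : E ≠ univ := by rintro rfl; exact h (hasEO_of_reach_univ A hE)
  obtain ⟨l, hnd, hto, hcond⟩ := hE
  refine ⟨univ \ E, ?_, ?_, ?_⟩
  · rw [Finset.sdiff_nonempty]
    intro hsub
    exact hEne (Finset.univ_subset_iff.mp hsub)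
  · intro j hj hCE
    have hjE : j ∉ E := (Finset.mem_sdiff.mp hj).2
    have hEeq : univ \ (univ \ E) = E := by
      rw [Finset.sdiff_sdiff_self_left]; exact Finset.univ_inter E
    rw [hEeq] at hCE
    -- extend the list
    have hReach : Reach A (insert j E) := by
      refine ⟨l ++ [j], ?_, ?_, ?_⟩
      · rw [List.nodup_append]
        exact ⟨hnd, List.nodup_singleton j, by
          intro a ha b hb
          simp only [List.mem_singleton] at hb
          subst hb
          exact fun hab => hjE (hto ▸ List.mem_toFinset.mpr (by rw [← hab]; exact ha))⟩
      · rw [List.toFinset_append, hto]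
        simp only [List.toFinset_cons, List.toFinset_nil, LawfulSingleton.insert_empty_eq]
        rw [Finset.union_comm, ← Finset.insert_eq]
      · intro k hk
        rw [List.length_append, List.length_singleton] at hk
        rcases lt_or_ge k l.length with hkl | hkl
        · have h1 : (l ++ [j]).take k = l.take k := List.take_append_of_le_length hkl.le
          rw [h1]
          simpa [List.get_eq_getElem, List.getElem_append_left hkl] using hcond k hkl
        · have hkeq : k = l.length := by omega
          subst hkeq
          have h1 : (l ++ [j]).take l.length = l := List.take_left
          rw [h1, hto]
          simpa [List.get_eq_getElem] using hCE
    have hcard : (insert j E).card = E.card + 1 := Finset.card_insert_of_notMem hjE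
    have := hEmax (insert j E) (Finset.mem_filter.mpr ⟨Finset.mem_univ _, hReach⟩)
    omega
  · intro j hj
    have hjE : j ∈ E := by
      by_contra hc
      exact hj (Finset.mem_sdiff.mpr ⟨Finset.mem_univ _, hc⟩)
    rw [← hto, List.mem_toFinset] at hjE
    obtain ⟨k, hk, hkj⟩ := List.mem_iff_getElem.mp hjE
    refine ⟨(l.take k).toFinset, ?_, ?_, ?_⟩
    · rw [Finset.disjoint_left]
      intro a ha
      rw [List.mem_toFinset] at ha
      have haE : a ∈ E := hto ▸ List.mem_toFinset.mpr (List.mem_of_mem_take ha)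
      simp [Finset.mem_sdiff, haE]
    · intro hc
      rw [List.mem_toFinset] at hc
      obtain ⟨i, hi, hij⟩ := List.mem_take_iff_getElem.mp hc
      have : i = k := (List.Nodup.getElem_inj_iff hnd (hi := by omega) (hj := hk)).mp (by rw [hij, hkj])
      omega
    · have := hcond k hk
      simpa [List.get_eq_getElem, hkj] using this

end Stmt5Aux

theorem stmt5 (d : ℕ) (hd : 0 < d) (n : ℕ) (A : Matrix (Fin 2) (Fin n) ℝ)
    (h : ¬ HasEO A) :
    ∃ b : Fin 2 → ℝ, ¬ SolConnected d A b := by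
  classical
  obtain ⟨T, hTne, hblock, helim⟩ := Stmt5Aux.extract A h
  have hMz : ∀ (i : Fin 2) (j' : Fin n), j' ∉ T → elimCols A (univ \ T) i j' = 0 := by
    intro i j' hj'
    simp [elimCols, Finset.mem_sdiff, hj']
  have hM : ∀ (i : Fin 2) (j' : Fin n), j' ∈ T → elimCols A (univ \ T) i j' = A i j' := by
    intro i j' hj'
    simp [elimCols, Finset.mem_sdiff, hj']
  -- sign structure on T
  have hopp : ∀ j ∈ T, (0 < A 0 j ∧ A 1 j < 0) ∨ (A 0 j < 0 ∧ 0 < A 1 j) := by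
    intro j hj
    have hb := hblock j hj
    rw [CanElim] at hb
    push_neg at hb
    obtain ⟨⟨i1, hi1, j1, hj1ne, hj1⟩, ⟨i2, hi2, j2, hj2ne, hj2⟩⟩ := hb
    rw [hM i1 j hj] at hi1
    rw [hM i2 j hj] at hi2
    have hne : i1 ≠ i2 := by rintro rfl; linarith
    fin_cases i1 <;> fin_cases i2
    · exact absurd rfl hne
    · exact Or.inl ⟨hi1, hi2⟩
    · exact Or.inr ⟨hi2, hi1⟩
    · exact absurd rfl hne
  have hnz : ∀ j ∈ T, A 0 j ≠ 0 ∧ A 1 j ≠ 0 := by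
    intro j hj
    rcases hopp j hj with ⟨h1, h2⟩ | ⟨h1, h2⟩
    · exact ⟨ne_of_gt h1, ne_of_lt h2⟩
    · exact ⟨ne_of_lt h1, ne_of_gt h2⟩
  obtain ⟨j₀, hj₀T⟩ := hTne
  have hpair : ∃ j₁ ∈ T, j₁ ≠ j₀ := by
    have hb := hblock j₀ hj₀T
    rw [CanElim] at hb
    push_neg at hb
    obtain ⟨⟨i1, hi1, j1, hj1ne, hj1⟩, -⟩ := hb
    have hj1T : j1 ∈ T := by
      by_contra hc
      exact hj1 (hMz i1 j1 hc)
    exact ⟨j1, hj1T, hj1ne⟩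
  -- sign structure off T
  have hsame : ∀ j ∉ T, (0 ≤ A 0 j ∧ 0 ≤ A 1 j) ∨ (A 0 j ≤ 0 ∧ A 1 j ≤ 0) := by
    intro j hj
    obtain ⟨J, hdisj, hjJ, hCE⟩ := helim j hj
    have hj₀ne : j₀ ≠ j := by rintro rfl; exact hj hj₀T
    have hj₀J : j₀ ∉ J := fun hc => (Finset.disjoint_left.mp hdisj hc) hj₀T
    have hMj : ∀ i : Fin 2, elimCols A J i j = A i j := by
      intro i; simp [elimCols, hjJ]
    have hMj₀ : ∀ i : Fin 2, elimCols A J i j₀ = A i j₀ := by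
      intro i; simp [elimCols, hj₀J]
    rcases hCE with hc | hc
    · right
      have key : ∀ i : Fin 2, ¬ (0 < A i j) := by
        intro i hpos
        have := hc i (by rwa [hMj]) j₀ hj₀ne
        rw [hMj₀] at this
        have hi0 : A i j₀ ≠ 0 := by
          fin_cases i
          · exact (hnz j₀ hj₀T).1
          · exact (hnz j₀ hj₀T).2
        exact hi0 this
      exact ⟨not_lt.mp (key 0), not_lt.mp (key 1)⟩
    · left
      have key : ∀ i : Fin 2, ¬ (A i j < 0) := by
        intro i hneg
        have := hc i (by rwa [hMj]) j₀ hj₀ne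
        rw [hMj₀] at this
        have hi0 : A i j₀ ≠ 0 := by
          fin_cases i
          · exact (hnz j₀ hj₀T).1
          · exact (hnz j₀ hj₀T).2
        exact hi0 this
      exact ⟨not_lt.mp (key 0), not_lt.mp (key 1)⟩
  -- choose p and q
  obtain ⟨p, hpT, hpmin⟩ := Finset.exists_min_image T (fun j => |A 1 j|) ⟨j₀, hj₀T⟩
  have hTp : (T.erase p).Nonempty := by
    obtain ⟨j₁, hj₁T, hj₁ne⟩ := hpair
    rcases eq_or_ne j₁ p with rfl | hne
    · exact ⟨j₀, Finset.mem_erase.mpr ⟨Ne.symm hj₁ne, hj₀T⟩⟩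
    · exact ⟨j₁, Finset.mem_erase.mpr ⟨hne, hj₁T⟩⟩
  obtain ⟨q, hqe, hqmin⟩ := Finset.exists_min_image (T.erase p) (fun j => |A 0 j|) hTp
  obtain ⟨hqp, hqT⟩ := Finset.mem_erase.mp hqe
  -- definitions
  set ε : ℝ := max (|A 0 q| - |A 0 p|) 0 with hε
  set u : Fin n → ℤ := fun j =>
    if j = p then (if 0 < A 0 p then 0 else (d : ℤ))
    else if j ∈ T then (if 0 < A 0 j then (d : ℤ) else 0)
    else (if 0 ≤ A 0 j ∧ 0 ≤ A 1 j then (d : ℤ) else 0) with hudef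
  set v : Fin n → ℤ := Function.update
      (Function.update u p (if 0 < A 0 p then 1 else (d : ℤ) - 1)) q
      (if 0 < A 0 q then (d : ℤ) - 1 else 1) with hvdef
  set b : Fin 2 → ℝ := fun i =>
    if i = 0 then (∑ j, A 0 j * (u j : ℝ)) - ε else ∑ j, A 1 j * (u j : ℝ) with hbdef
  have hd1 : (1:ℤ) ≤ (d:ℤ) := by exact_mod_cast hd
  have hup : u p = if 0 < A 0 p then 0 else (d : ℤ) := by rw [hudef]; simp
  have huT : ∀ j ∈ T, j ≠ p → u j = if 0 < A 0 j then (d : ℤ) else 0 := by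
    intro j hj hne; rw [hudef]; simp [hne, hj]
  have huO : ∀ j ∉ T, u j = if 0 ≤ A 0 j ∧ 0 ≤ A 1 j then (d : ℤ) else 0 := by
    intro j hj
    have hne : j ≠ p := by rintro rfl; exact hj hpT
    rw [hudef]; simp [hne, hj]
  have hvp : v p = if 0 < A 0 p then 1 else (d : ℤ) - 1 := by
    rw [hvdef]
    rw [Function.update_of_ne hqp.symm, Function.update_self]
  have hvq : v q = if 0 < A 0 q then (d : ℤ) - 1 else 1 := by
    rw [hvdef, Function.update_self]
  have hvo : ∀ j, j ≠ p → j ≠ q → v j = u j := by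
    intro j h1 h2
    rw [hvdef, Function.update_of_ne h2, Function.update_of_ne h1]
  have habs0p : 0 < |A 0 p| := abs_pos.mpr (hnz p hpT).1
  have habs0q : 0 < |A 0 q| := abs_pos.mpr (hnz q hqT).1
  have habs1p : 0 < |A 1 p| := abs_pos.mpr (hnz p hpT).2
  have hε0 : 0 ≤ ε := le_max_right _ _
  have hεlt : ε < |A 0 q| := by
    rw [hε]; apply max_lt <;> linarith
  have huIn : InD d u := by
    intro j
    rw [hudef]
    dsimp only
    split_ifs <;> omega
  have hvIn : InD d v := by
    intro j
    rcases eq_or_ne j q with rfl | hjq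
    · rw [hvq]; split_ifs <;> omega
    rcases eq_or_ne j p with rfl | hjp
    · rw [hvp]; split_ifs <;> omega
    · rw [hvo j hjp hjq]; exact huIn j
  have hsub : ∀ (i : Fin 2) (x : Fin n → ℤ),
      (∑ j, A i j * (u j : ℝ)) - (∑ j, A i j * (x j : ℝ))
        = ∑ j, A i j * ((u j : ℝ) - (x j : ℝ)) := by
    intro i x
    rw [← Finset.sum_sub_distrib]
    exact Finset.sum_congr rfl fun j _ => by ring
  have hoff : ∀ (i : Fin 2) (x : Fin n → ℤ), InD d x → ∀ j, j ∉ T →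
      0 ≤ A i j * ((u j : ℝ) - (x j : ℝ)) := by
    intro i x hx j hj
    obtain ⟨hx0, hx1⟩ := hx j
    rw [huO j hj]
    by_cases hc : 0 ≤ A 0 j ∧ 0 ≤ A 1 j
    · rw [if_pos hc]
      have hAij : 0 ≤ A i j := by
        fin_cases i
        · exact hc.1
        · exact hc.2
      have hxd : (x j : ℝ) ≤ (d : ℝ) := by exact_mod_cast hx1
      apply mul_nonneg hAij
      push_cast
      linarith
    · have hle : A i j ≤ 0 := by
        rcases hsame j hj with h' | h'
        · exact absurd h' hc
        · fin_cases i
          · exact h'.1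
          · exact h'.2
      rw [if_neg hc]
      have hx0' : (0:ℝ) ≤ (x j : ℝ) := by exact_mod_cast hx0
      push_cast
      nlinarith
  have hb0' : b 0 = (∑ j, A 0 j * (u j : ℝ)) - ε := by rw [hbdef]; norm_num
  have hb1' : b 1 = ∑ j, A 1 j * (u j : ℝ) := by rw [hbdef]; norm_num
  have hfin2 : ∀ i : Fin 2, i = 0 ∨ i = 1 := by
    intro i
    fin_cases i
    · exact Or.inl rfl
    · exact Or.inr rfl
  have hFu : Feas d A b u := by
    refine ⟨huIn, ?_⟩
    intro i
    rcases hfin2 i with rfl | rfl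
    · rw [hb0']
      linarith
    · rw [hb1']
  have hsum2 : ∀ i : Fin 2, (∑ j, A i j * ((u j : ℝ) - (v j : ℝ)))
      = A i p * ((u p : ℝ) - (v p : ℝ)) + A i q * ((u q : ℝ) - (v q : ℝ)) := by
    intro i
    rw [show (∑ j, A i j * ((u j : ℝ) - (v j : ℝ)))
        = ∑ j ∈ ({p, q} : Finset (Fin n)), A i j * ((u j : ℝ) - (v j : ℝ)) from
      (Finset.sum_subset (Finset.subset_univ _) (fun x _ hx => by
        simp only [Finset.mem_insert, Finset.mem_singleton, not_or] at hx
        rw [hvo x hx.1 hx.2]; ring)).symm]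
    exact Finset.sum_pair hqp.symm
  have hPp : A 0 p * ((u p : ℝ) - (v p : ℝ)) = -|A 0 p|
      ∧ A 1 p * ((u p : ℝ) - (v p : ℝ)) = |A 1 p| := by
    rcases hopp p hpT with ⟨ha, hbb⟩ | ⟨ha, hbb⟩
    · rw [hup, hvp, if_pos ha, if_pos ha]
      constructor
      · rw [abs_of_pos ha]; push_cast; ring
      · rw [abs_of_neg hbb]; push_cast; ring
    · rw [hup, hvp, if_neg (not_lt.mpr ha.le), if_neg (not_lt.mpr ha.le)]
      constructor
      · rw [abs_of_neg ha]; push_cast; ring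
      · rw [abs_of_pos hbb]; push_cast; ring
  have hPq : A 0 q * ((u q : ℝ) - (v q : ℝ)) = |A 0 q|
      ∧ A 1 q * ((u q : ℝ) - (v q : ℝ)) = -|A 1 q| := by
    rcases hopp q hqT with ⟨ha, hbb⟩ | ⟨ha, hbb⟩
    · rw [huT q hqT hqp, hvq, if_pos ha, if_pos ha]
      constructor
      · rw [abs_of_pos ha]; push_cast; ring
      · rw [abs_of_neg hbb]; push_cast; ring
    · rw [huT q hqT hqp, hvq, if_neg (not_lt.mpr ha.le), if_neg (not_lt.mpr ha.le)]
      constructor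
      · rw [abs_of_neg ha]; push_cast; ring
      · rw [abs_of_pos hbb]; push_cast; ring
  have hFv : Feas d A b v := by
    refine ⟨hvIn, ?_⟩
    intro i
    rcases hfin2 i with rfl | rfl
    · have h1 : (∑ j, A 0 j * (u j : ℝ)) - (∑ j, A 0 j * (v j : ℝ)) = |A 0 q| - |A 0 p| := by
        rw [hsub 0 v, hsum2 0, hPp.1, hPq.1]; ring
      have h2 : |A 0 q| - |A 0 p| ≤ ε := le_max_left _ _
      rw [hb0']
      linarith
    · have h1 : (∑ j, A 1 j * (u j : ℝ)) - (∑ j, A 1 j * (v j : ℝ)) = |A 1 p| - |A 1 q| := by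
        rw [hsub 1 v, hsum2 1, hPp.2, hPq.2]; ring
      have h2 : |A 1 p| ≤ |A 1 q| := hpmin q hqT
      rw [hb1']
      linarith
  -- the key invariant
  have hkey : ∀ z z', SolStep d A b z z' → (∀ j ∈ T, z j = u j) → (∀ j ∈ T, z' j = u j) := by
    intro z z' hstep hz
    obtain ⟨hfz, hfz', hham⟩ := hstep
    unfold hammingDist at hham
    obtain ⟨j0, hj0⟩ := Finset.card_eq_one.mp hham
    rw [Finset.eq_singleton_iff_unique_mem] at hj0
    have hdiffj0 : z j0 ≠ z' j0 := (Finset.mem_filter.mp hj0.1).2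
    have hagree : ∀ j, j ≠ j0 → z j = z' j := by
      intro j hj
      by_contra hc
      exact hj (hj0.2 j (Finset.mem_filter.mpr ⟨Finset.mem_univ _, hc⟩))
    by_cases hj0T : j0 ∈ T
    · exfalso
      obtain ⟨hzIn', hzF'⟩ := hfz'
      have hz'T : ∀ j ∈ T, j ≠ j0 → z' j = u j := fun j hj hne => (hagree j hne) ▸ hz j hj
      have hz'j0 : z' j0 ≠ u j0 := by
        rw [← hz j0 hj0T]
        exact Ne.symm hdiffj0
      by_cases hj0p : j0 = p
      · subst hj0p
        have hr := hzF' 1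
        have hsle : ∑ j, A 1 j * ((u j : ℝ) - (z' j : ℝ)) ≤ 0 := by
          rw [← hsub 1 z']
          rw [hb1'] at hr
          linarith
        have hpterm : |A 1 j0| ≤ A 1 j0 * ((u j0 : ℝ) - (z' j0 : ℝ)) := by
          obtain ⟨hz0, hz1⟩ := hzIn' j0
          rcases hopp j0 hpT with ⟨ha, hbb⟩ | ⟨ha, hbb⟩
          · rw [hup, if_pos ha]
            have hne0 : z' j0 ≠ 0 := by rw [hup, if_pos ha] at hz'j0; exact hz'j0
            have h1' : (1:ℝ) ≤ (z' j0 : ℝ) := by exact_mod_cast (by omega : (1:ℤ) ≤ z' j0)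
            rw [abs_of_neg hbb]
            push_cast
            nlinarith
          · rw [hup, if_neg (not_lt.mpr ha.le)]
            have hne0 : z' j0 ≠ (d:ℤ) := by
              rw [hup, if_neg (not_lt.mpr ha.le)] at hz'j0; exact hz'j0
            have h1' : (z' j0 : ℝ) ≤ (d:ℝ) - 1 := by
              exact_mod_cast (by omega : z' j0 ≤ (d:ℤ) - 1)
            rw [abs_of_pos hbb]
            push_cast
            nlinarith
        have hterm : ∀ j ∈ Finset.univ, (0:ℝ) ≤ A 1 j * ((u j : ℝ) - (z' j : ℝ)) := by
          intro j _
          by_cases hjT : j ∈ T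
          · rcases eq_or_ne j j0 with rfl | hjp
            · exact le_trans (abs_nonneg _) hpterm
            · rw [hz'T j hjT hjp]; simp
          · exact hoff 1 z' hzIn' j hjT
        have h5 := Finset.single_le_sum hterm (Finset.mem_univ j0)
        linarith
      · have hr := hzF' 0
        have hsle : ∑ j, A 0 j * ((u j : ℝ) - (z' j : ℝ)) ≤ ε := by
          rw [← hsub 0 z']
          rw [hb0'] at hr
          linarith
        have hj0q : |A 0 q| ≤ |A 0 j0| := hqmin j0 (Finset.mem_erase.mpr ⟨hj0p, hj0T⟩)
        have hj0term : |A 0 j0| ≤ A 0 j0 * ((u j0 : ℝ) - (z' j0 : ℝ)) := by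
          obtain ⟨hz0, hz1⟩ := hzIn' j0
          rcases hopp j0 hj0T with ⟨ha, hbb⟩ | ⟨ha, hbb⟩
          · rw [huT j0 hj0T hj0p, if_pos ha]
            have hne0 : z' j0 ≠ (d:ℤ) := by
              rw [huT j0 hj0T hj0p, if_pos ha] at hz'j0; exact hz'j0
            have h1' : (z' j0 : ℝ) ≤ (d:ℝ) - 1 := by
              exact_mod_cast (by omega : z' j0 ≤ (d:ℤ) - 1)
            rw [abs_of_pos ha]
            push_cast
            nlinarith
          · rw [huT j0 hj0T hj0p, if_neg (not_lt.mpr ha.le)]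
            have hne0 : z' j0 ≠ 0 := by
              rw [huT j0 hj0T hj0p, if_neg (not_lt.mpr ha.le)] at hz'j0; exact hz'j0
            have h1' : (1:ℝ) ≤ (z' j0 : ℝ) := by exact_mod_cast (by omega : (1:ℤ) ≤ z' j0)
            rw [abs_of_neg ha]
            push_cast
            nlinarith
        have hterm : ∀ j ∈ Finset.univ, (0:ℝ) ≤ A 0 j * ((u j : ℝ) - (z' j : ℝ)) := by
          intro j _
          by_cases hjT : j ∈ T
          · rcases eq_or_ne j j0 with rfl | hjj0
            · exact le_trans (abs_nonneg _) hj0term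
            · rw [hz'T j hjT hjj0]; simp
          · exact hoff 0 z' hzIn' j hjT
        have h5 := Finset.single_le_sum hterm (Finset.mem_univ j0)
        linarith
    · intro j hjT
      have hne : j ≠ j0 := fun hc => hj0T (hc ▸ hjT)
      rw [← hagree j hne]
      exact hz j hjT
  refine ⟨b, ?_⟩
  intro hcon
  have hpath := hcon u v hFu hFv
  have hmono : ∀ w', Relation.ReflTransGen (SolStep d A b) u w' →
      (∀ j ∈ T, w' j = u j) := by
    intro w' hrel
    induction hrel with
    | refl => exact fun j _ => rfl
    | tail hseg hstep ih => exact hkey _ _ hstep ih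
  have hq' := hmono v hpath q hqT
  rcases hopp q hqT with ⟨ha, -⟩ | ⟨ha, -⟩
  · rw [hvq, if_pos ha, huT q hqT hqp, if_pos ha] at hq'
    omega
  · rw [hvq, if_neg (not_lt.mpr ha.le), huT q hqT hqp, if_neg (not_lt.mpr ha.le)] at hq'
    omega
end

section
/- Let A ∈ ℝ^{m×2} be a matrix with two columns that cannot be eliminated at either column. Then there exist row indices i_1, i_2 ∈ [m] such that sgn(a_{i_1 1}) = -sgn(a_{i_2 1}) and sgn(a_{i_1 2}) = -sgn(a_{i_2 2}). -/
open Finset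

theorem stmt6 (m : ℕ) (A : Matrix (Fin m) (Fin 2) ℝ) (h : ∀ j, ¬ CanElim A j) :
    ∃ i1 i2 : Fin m, Real.sign (A i1 0) = - Real.sign (A i2 0) ∧
      Real.sign (A i1 1) = - Real.sign (A i2 1) := by
  have h0 := h 0
  have h1 := h 1
  unfold CanElim at h0 h1
  push_neg at h0 h1
  obtain ⟨⟨p, hp0, jp, hjp, hp1⟩, ⟨n, hn0, jn, hjn, hn1⟩⟩ := h0
  obtain ⟨⟨q, hq1, jq, hjq, hq0⟩, ⟨r, hr1, jr, hjr, hr0⟩⟩ := h1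
  have ejp : jp = 1 := by omega
  have ejn : jn = 1 := by omega
  have ejq : jq = 0 := by omega
  have ejr : jr = 0 := by omega
  subst ejp ejn ejq ejr
  rcases hp1.lt_or_gt with hP | hP <;> rcases hn1.lt_or_gt with hN | hN
  · -- A p 1 < 0, A n 1 < 0 : use q (A q 1 > 0)
    rcases hq0.lt_or_gt with hQ | hQ
    · exact ⟨p, q, by rw [Real.sign_of_pos hp0, Real.sign_of_neg hQ]; try ring,
        by rw [Real.sign_of_neg hP, Real.sign_of_pos hq1]; try ring⟩
    · exact ⟨n, q, by rw [Real.sign_of_neg hn0, Real.sign_of_pos hQ]; try ring,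
        by rw [Real.sign_of_neg hN, Real.sign_of_pos hq1]; try ring⟩
  · exact ⟨p, n, by rw [Real.sign_of_pos hp0, Real.sign_of_neg hn0]; try ring,
      by rw [Real.sign_of_neg hP, Real.sign_of_pos hN]; try ring⟩
  · exact ⟨p, n, by rw [Real.sign_of_pos hp0, Real.sign_of_neg hn0]; try ring,
      by rw [Real.sign_of_pos hP, Real.sign_of_neg hN]; try ring⟩
  · -- both positive in col 1 : use r (A r 1 < 0)
    rcases hr0.lt_or_gt with hR | hR
    · exact ⟨p, r, by rw [Real.sign_of_pos hp0, Real.sign_of_neg hR]; try ring,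
        by rw [Real.sign_of_pos hP, Real.sign_of_neg hr1]; try ring⟩
    · exact ⟨n, r, by rw [Real.sign_of_neg hn0, Real.sign_of_pos hR]; try ring,
        by rw [Real.sign_of_pos hN, Real.sign_of_neg hr1]; try ring⟩
end

section
/- Let A ∈ ℝ^{3×3} be a matrix that cannot be eliminated at any column, and define Λ_{i_1,i_2} = { j ∈ [3] : sgn(a_{i_1 j}) = -sgn(a_{i_2 j}) ≠ 0 }. If there exist distinct i'_1, i'_2, i'_3 ∈ [3] with Λ_{i'_1,i'_2} ∩ Λ_{i'_2,i'_3} ≠ ∅, then there exist i_1, i_2 ∈ [3] with |Λ_{i_1,i_2}| ≥ 2. -/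
open Finset

open Classical in
/-- `Λ_{i₁,i₂}`: columns where rows `i₁` and `i₂` have (nonzero) opposite signs. -/
noncomputable def Lam {n : ℕ} (A : Matrix (Fin 3) (Fin n) ℝ) (i1 i2 : Fin 3) : Finset (Fin n) :=
  Finset.univ.filter
    (fun j => Real.sign (A i1 j) = - Real.sign (A i2 j) ∧ Real.sign (A i1 j) ≠ 0)


lemma lam_symm {n : ℕ} (A : Matrix (Fin 3) (Fin n) ℝ) (a b : Fin 3) (j : Fin n)
    (hm : j ∈ Lam A a b) : j ∈ Lam A b a := by
  simp only [Lam, Finset.mem_filter, Finset.mem_univ, true_and] at hm ⊢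
  obtain ⟨h1, h2⟩ := hm
  refine ⟨by rw [h1]; ring, fun hb => h2 (by rw [h1, hb, neg_zero])⟩

lemma lam_irrefl {n : ℕ} (A : Matrix (Fin 3) (Fin n) ℝ) (a : Fin 3) (j : Fin n) :
    j ∉ Lam A a a := by
  simp only [Lam, Finset.mem_filter, Finset.mem_univ, true_and, not_and, ne_eq, not_not]
  intro h1
  linarith

theorem stmt9 (A : Matrix (Fin 3) (Fin 3) ℝ) (h : ∀ j, ¬ CanElim A j)
    (i1' i2' i3' : Fin 3) (h12 : i1' ≠ i2') (h13 : i1' ≠ i3') (h23 : i2' ≠ i3')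
    (hint : (Lam A i1' i2' ∩ Lam A i2' i3').Nonempty) :
    ∃ i1 i2 : Fin 3, 2 ≤ (Lam A i1 i2).card := by
  by_contra hc
  push_neg at hc
  have hle : ∀ i1 i2 : Fin 3, (Lam A i1 i2).card ≤ 1 := fun i1 i2 => by
    have := hc i1 i2; omega
  obtain ⟨j0, hj0⟩ := hint
  rw [Finset.mem_inter] at hj0
  have hcover : ∀ a : Fin 3, a = i1' ∨ a = i2' ∨ a = i3' := by
    intro a
    have huniv : ({i1', i2', i3'} : Finset (Fin 3)) = Finset.univ := by
      apply Finset.eq_univ_of_card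
      rw [Finset.card_insert_of_notMem (by simp [h12, h13]),
          Finset.card_insert_of_notMem (by simp [h23]), Finset.card_singleton]
      rfl
    have ha : a ∈ ({i1', i2', i3'} : Finset (Fin 3)) := huniv ▸ Finset.mem_univ a
    simpa using ha
  have hpair : ∀ j : Fin 3, ∃ a b, j ∈ Lam A a b := by
    intro j
    have hne := h j
    rw [CanElim] at hne
    push_neg at hne
    obtain ⟨⟨ip, hip, _⟩, ⟨im, him, _⟩⟩ := hne
    refine ⟨ip, im, ?_⟩
    simp only [Lam, Finset.mem_filter, Finset.mem_univ, true_and]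
    rw [Real.sign_of_pos hip, Real.sign_of_neg him]
    norm_num
  have step : ∀ j : Fin 3, j ≠ j0 → ∀ x y : Fin 3, j ∈ Lam A x y →
      ((x = i1' ∧ y = i2') ∨ (x = i2' ∧ y = i3')) → False := by
    intro j hj x y hxy hcase
    rcases hcase with ⟨hx, hy⟩ | ⟨hx, hy⟩
    · rw [hx, hy] at hxy
      exact hj (Finset.card_le_one.mp (hle i1' i2') j hxy j0 hj0.1)
    · rw [hx, hy] at hxy
      exact hj (Finset.card_le_one.mp (hle i2' i3') j hxy j0 hj0.2)
  have hkey : ∀ j : Fin 3, j ≠ j0 → j ∈ Lam A i1' i3' := by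
    intro j hj
    obtain ⟨a, b, hab⟩ := hpair j
    rcases hcover a with ha | ha | ha <;> rcases hcover b with hb | hb | hb <;>
        subst ha <;> subst hb
    · exact absurd hab (lam_irrefl A _ j)
    · exact (step j hj _ _ hab (Or.inl ⟨rfl, rfl⟩)).elim
    · exact hab
    · exact (step j hj _ _ (lam_symm A _ _ j hab) (Or.inl ⟨rfl, rfl⟩)).elim
    · exact absurd hab (lam_irrefl A _ j)
    · exact (step j hj _ _ hab (Or.inr ⟨rfl, rfl⟩)).elim
    · exact lam_symm A _ _ j hab
    · exact (step j hj _ _ (lam_symm A _ _ j hab) (Or.inr ⟨rfl, rfl⟩)).elim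
    · exact absurd hab (lam_irrefl A _ j)
  have hsub : Finset.univ \ {j0} ⊆ Lam A i1' i3' := by
    intro j hjm
    simp only [Finset.mem_sdiff, Finset.mem_singleton] at hjm
    exact hkey j hjm.2
  have hcard : (Finset.univ \ {j0} : Finset (Fin 3)).card = 2 := by
    rw [Finset.card_sdiff_of_subset (by simp)]; simp
  have h1 := Finset.card_le_card hsub
  have h2 := hle i1' i3'
  omega
end

section
/- (Expansion Lemma) Let A ∈ ℝ^{m×n}, let E ⊆ [n] be a set of columns produced by greedily eliminating columns of A (repeatedly adding to E any column at which the matrix with columns in E already zeroed can be eliminated, until no more exist), and let Δ = [n] \ E. Let A^r be the submatrix of A on columns Δ. If there exists b^r ∈ ℝ^m such that the solution graph of (A^r, b^r) over D = {0,...,d} is not connected, then there exists b ∈ ℝ^m such that the solution graph of (A, b) is not connected. -/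
open Finset

/-- `E` is produced by greedily eliminating columns of `A`: there is an ordering of `E`
such that each column can be eliminated in the matrix with the earlier ones zeroed out,
and no further column of the matrix with all of `E` zeroed out can be eliminated. -/
def GreedyElimSet {m n : ℕ} (A : Matrix (Fin m) (Fin n) ℝ) (E : Finset (Fin n)) : Prop :=
  (∃ l : List (Fin n), l.Nodup ∧ l.toFinset = E ∧
      ∀ t : Fin l.length, CanElim (elimCols A (l.take t).toFinset) (l.get t)) ∧
  ∀ j ∉ E, ¬ CanElim (elimCols A E) j

section Aux

variable {d m n : ℕ}

/-- The first disjunct of `CanElim` at step `t` of the elimination ordering `l`. -/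
def PosCase (A : Matrix (Fin m) (Fin n) ℝ) (l : List (Fin n)) (t : Fin l.length) : Prop :=
  ∀ i, 0 < elimCols A (l.take (t : ℕ)).toFinset i (l.get t) →
    ∀ j', j' ≠ l.get t → elimCols A (l.take (t : ℕ)).toFinset i j' = 0

open Classical in
/-- The target value of the `t`-th eliminated coordinate. -/
noncomputable def xval (d : ℕ) (A : Matrix (Fin m) (Fin n) ℝ) (l : List (Fin n))
    (t : Fin l.length) : ℤ :=
  if PosCase A l t then (if ∃ i, 0 < A i (l.get t) then (d : ℤ) else 0)
  else (if ∃ i, A i (l.get t) < 0 then 0 else (d : ℤ))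

open Classical in
/-- The target values as a vector indexed by all columns. -/
noncomputable def xhat (d : ℕ) (A : Matrix (Fin m) (Fin n) ℝ) (l : List (Fin n))
    (j : Fin n) : ℤ :=
  if hj : j ∈ l then xval d A l ⟨l.idxOf j, List.idxOf_lt_length_iff.2 hj⟩ else 0

open Classical in
/-- The constructed right-hand side for the big system. -/
noncomputable def bb (d : ℕ) (A : Matrix (Fin m) (Fin n) ℝ) (l : List (Fin n))
    (br : Fin m → ℝ) (i : Fin m) : ℝ :=
  (if ∀ j, j ∉ l → A i j = 0 then 0 else br i)
    + ∑ j ∈ l.toFinset, A i j * (xhat d A l j : ℝ)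

/-- `x` with its first `t` eliminated coordinates replaced by their target values. -/
noncomputable def mixv (d : ℕ) (A : Matrix (Fin m) (Fin n) ℝ) (l : List (Fin n))
    (t : ℕ) (x : Fin n → ℤ) (j : Fin n) : ℤ :=
  if j ∈ (l.take t).toFinset then xhat d A l j else x j

lemma xval_bounds (A : Matrix (Fin m) (Fin n) ℝ) (l : List (Fin n)) (t : Fin l.length) :
    0 ≤ xval d A l t ∧ xval d A l t ≤ (d : ℤ) := by
  unfold xval; split_ifs <;> omega

lemma xhat_bounds (A : Matrix (Fin m) (Fin n) ℝ) (l : List (Fin n)) (j : Fin n) :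
    0 ≤ xhat d A l j ∧ xhat d A l j ≤ (d : ℤ) := by
  unfold xhat
  split_ifs with hj
  · exact xval_bounds A l _
  · omega

lemma xhat_get {A : Matrix (Fin m) (Fin n) ℝ} {l : List (Fin n)} (hnd : l.Nodup)
    (t : Fin l.length) : xhat d A l (l.get t) = xval d A l t := by
  unfold xhat
  rw [dif_pos (l.get_mem t)]
  congr 1
  ext
  exact List.get_idxOf hnd t

lemma get_not_mem_take {l : List (Fin n)} (hnd : l.Nodup) (t : Fin l.length) :
    l.get t ∉ (l.take (t : ℕ)).toFinset := by
  intro hmem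
  have hdisj := List.disjoint_of_nodup_append
    (by rw [List.take_append_drop]; exact hnd : (l.take (t : ℕ) ++ l.drop (t : ℕ)).Nodup)
  have hdrop : l.get t ∈ l.drop (t : ℕ) := by
    have h9 : l.get t ∈ l[(t : ℕ)] :: l.drop ((t : ℕ) + 1) := by
      rw [List.get_eq_getElem]; exact List.mem_cons_self
    rwa [← List.drop_eq_getElem_cons t.2] at h9
  exact hdisj (List.mem_toFinset.1 hmem) hdrop

lemma mixv_zero (A : Matrix (Fin m) (Fin n) ℝ) (l : List (Fin n)) (x : Fin n → ℤ) :
    mixv d A l 0 x = x := by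
  funext j; simp [mixv]

lemma mix_succ {A : Matrix (Fin m) (Fin n) ℝ} {l : List (Fin n)} (hnd : l.Nodup)
    (t : Fin l.length) (x : Fin n → ℤ) :
    mixv d A l ((t : ℕ) + 1) x
      = Function.update (mixv d A l (t : ℕ) x) (l.get t) (xval d A l t) := by
  classical
  have htake : (l.take ((t : ℕ) + 1)).toFinset
      = insert (l.get t) (l.take (t : ℕ)).toFinset := by
    rw [List.take_succ]
    ext j
    simp only [List.mem_toFinset, List.mem_append, Finset.mem_insert,
      List.getElem?_eq_getElem t.2, Option.toList_some, List.mem_singleton,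
      List.get_eq_getElem]
    tauto
  funext j'
  by_cases hj : j' = l.get t
  · subst hj
    rw [Function.update_self]
    unfold mixv
    rw [htake, if_pos (Finset.mem_insert_self _ _), xhat_get hnd]
  · rw [Function.update_of_ne hj]
    unfold mixv
    rw [htake]
    by_cases h2 : j' ∈ (l.take (t : ℕ)).toFinset
    · rw [if_pos (Finset.mem_insert_of_mem h2), if_pos h2]
    · rw [if_neg (fun hmem => by
        rcases Finset.mem_insert.1 hmem with h9 | h9
        exacts [hj h9, h2 h9]), if_neg h2]

lemma sum_mul_update (c : Fin n → ℝ) (v : Fin n → ℤ) (j : Fin n) (a : ℤ) :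
    ∑ j', c j' * ((Function.update v j a j' : ℤ) : ℝ)
      = (∑ j', c j' * (v j' : ℝ)) + c j * ((a : ℝ) - (v j : ℝ)) := by
  classical
  rw [← Finset.sum_erase_add _ _ (Finset.mem_univ j),
    ← Finset.sum_erase_add Finset.univ (fun j' => c j' * (v j' : ℝ)) (Finset.mem_univ j)]
  have h1 : ∑ j' ∈ Finset.univ.erase j, c j' * ((Function.update v j a j' : ℤ) : ℝ)
      = ∑ j' ∈ Finset.univ.erase j, c j' * (v j' : ℝ) :=
    Finset.sum_congr rfl fun x hx => by
      rw [Function.update_of_ne (Finset.mem_erase.1 hx).1]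
  rw [h1, Function.update_self]; ring

lemma feas_update {A : Matrix (Fin m) (Fin n) ℝ} {b : Fin m → ℝ} {x : Fin n → ℤ}
    (hx : Feas d A b x) (j : Fin n) (a : ℤ) (ha : 0 ≤ a ∧ a ≤ (d : ℤ))
    (hmono : ∀ i, 0 ≤ A i j * ((a : ℝ) - (x j : ℝ))) :
    Feas d A b (Function.update x j a) := by
  constructor
  · intro j'
    by_cases h : j' = j
    · subst h; rw [Function.update_self]; exact ha
    · rw [Function.update_of_ne h]; exact hx.1 j'
  · intro i
    rw [sum_mul_update]
    have h1 := hx.2 i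
    have h2 := hmono i
    linarith

lemma forced {A : Matrix (Fin m) (Fin n) ℝ} {l : List (Fin n)} {br : Fin m → ℝ}
    (t : Fin l.length) (x : Fin n → ℤ)
    (hf : Feas d A (bb d A l br) (mixv d A l (t : ℕ) x)) (i0 : Fin m)
    (hsupp : ∀ j', j' ≠ l.get t → j' ∉ (l.take (t : ℕ)).toFinset → A i0 j' = 0) :
    0 ≤ A i0 (l.get t) * ((mixv d A l (t : ℕ) x (l.get t) : ℝ) - (xhat d A l (l.get t) : ℝ)) := by
  have hjl : l.get t ∈ l := l.get_mem t
  have hE : ∀ j', j' ∉ l → A i0 j' = 0 := by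
    intro j' hj'
    exact hsupp j' (fun hh => hj' (hh ▸ hjl))
      (fun hmem => hj' (List.take_subset _ _ (List.mem_toFinset.1 hmem)))
  have hbval : bb d A l br i0 = ∑ j', A i0 j' * (xhat d A l j' : ℝ) := by
    unfold bb
    rw [if_pos hE, zero_add]
    exact Finset.sum_subset (Finset.subset_univ _)
      (fun j' _ hj' => by rw [hE j' (fun hh => hj' (List.mem_toFinset.2 hh)), zero_mul])
  have h2 := hf.2 i0
  rw [hbval] at h2
  have key : ∑ j', A i0 j' * ((mixv d A l (t : ℕ) x j' : ℝ) - (xhat d A l j' : ℝ))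
      = A i0 (l.get t) * ((mixv d A l (t : ℕ) x (l.get t) : ℝ) - (xhat d A l (l.get t) : ℝ)) := by
    apply Finset.sum_eq_single
    · intro j' _ hne
      by_cases hmem : j' ∈ (l.take (t : ℕ)).toFinset
      · have : mixv d A l (t : ℕ) x j' = xhat d A l j' := if_pos hmem
        rw [this]; ring
      · rw [hsupp j' hne hmem, zero_mul]
    · intro habs; exact absurd (Finset.mem_univ _) habs
  have h3 : ∑ j', A i0 j' * ((mixv d A l (t : ℕ) x j' : ℝ) - (xhat d A l j' : ℝ))
      = (∑ j', A i0 j' * (mixv d A l (t : ℕ) x j' : ℝ))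
        - ∑ j', A i0 j' * (xhat d A l j' : ℝ) := by
    rw [← Finset.sum_sub_distrib]
    exact Finset.sum_congr rfl fun j' _ => by ring
  rw [← key, h3]
  linarith

lemma step_feas {A : Matrix (Fin m) (Fin n) ℝ} {l : List (Fin n)} {br : Fin m → ℝ}
    (hnd : l.Nodup)
    (helim : ∀ t : Fin l.length, CanElim (elimCols A (l.take (t : ℕ)).toFinset) (l.get t))
    (t : Fin l.length) (x : Fin n → ℤ)
    (hf : Feas d A (bb d A l br) (mixv d A l (t : ℕ) x)) :
    Feas d A (bb d A l br) (mixv d A l ((t : ℕ) + 1) x) := by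
  classical
  rw [mix_succ hnd t x]
  have hnotin : l.get t ∉ (l.take (t : ℕ)).toFinset := get_not_mem_take hnd t
  by_cases hpos : PosCase A l t
  · by_cases hp : ∃ i, 0 < A i (l.get t)
    · -- pinned to d
      have hxv : xval d A l t = (d : ℤ) := by
        unfold xval; rw [if_pos hpos, if_pos hp]
      obtain ⟨i0, hi0⟩ := hp
      have hsupp : ∀ j', j' ≠ l.get t → j' ∉ (l.take (t : ℕ)).toFinset → A i0 j' = 0 := by
        intro j' hne hmem
        have h5 := hpos i0 (by rw [show elimCols A (l.take (t : ℕ)).toFinset i0 (l.get t)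
          = A i0 (l.get t) from if_neg hnotin]; exact hi0) j' hne
        simpa [elimCols, hmem] using h5
      have hforce := forced t x hf i0 hsupp
      have hxhj : xhat d A l (l.get t) = (d : ℤ) := by rw [xhat_get hnd, hxv]
      have hge : (d : ℝ) ≤ (mixv d A l (t : ℕ) x (l.get t) : ℝ) := by
        rw [hxhj] at hforce
        push_cast at hforce
        by_contra hlt
        push_neg at hlt
        nlinarith
      have hle : mixv d A l (t : ℕ) x (l.get t) ≤ (d : ℤ) := (hf.1 (l.get t)).2
      have heq : mixv d A l (t : ℕ) x (l.get t) = xval d A l t := by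
        rw [hxv]
        have : (d : ℤ) ≤ mixv d A l (t : ℕ) x (l.get t) := by exact_mod_cast hge
        omega
      rw [← heq, Function.update_eq_self]
      exact hf
    · -- monotone move down to 0
      have hxv : xval d A l t = 0 := by
        unfold xval; rw [if_pos hpos, if_neg hp]
      rw [hxv]
      push_neg at hp
      refine feas_update hf (l.get t) 0 ⟨le_refl 0, by positivity⟩ (fun i => ?_)
      have h1 : A i (l.get t) ≤ 0 := hp i
      have h2 : (0 : ℝ) ≤ (mixv d A l (t : ℕ) x (l.get t) : ℝ) := by
        exact_mod_cast (hf.1 (l.get t)).1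
      push_cast
      nlinarith [mul_nonneg (neg_nonneg.2 h1) h2]
  · have hneg := (helim t).resolve_left hpos
    by_cases hn : ∃ i, A i (l.get t) < 0
    · -- pinned to 0
      have hxv : xval d A l t = 0 := by
        unfold xval; rw [if_neg hpos, if_pos hn]
      obtain ⟨i0, hi0⟩ := hn
      have hsupp : ∀ j', j' ≠ l.get t → j' ∉ (l.take (t : ℕ)).toFinset → A i0 j' = 0 := by
        intro j' hne hmem
        have h5 := hneg i0 (by rw [show elimCols A (l.take (t : ℕ)).toFinset i0 (l.get t)
          = A i0 (l.get t) from if_neg hnotin]; exact hi0) j' hne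
        simpa [elimCols, hmem] using h5
      have hforce := forced t x hf i0 hsupp
      have hxhj : xhat d A l (l.get t) = 0 := by rw [xhat_get hnd, hxv]
      have hle0 : (mixv d A l (t : ℕ) x (l.get t) : ℝ) ≤ 0 := by
        rw [hxhj] at hforce
        push_cast at hforce
        by_contra hlt
        push_neg at hlt
        nlinarith
      have hge0 : 0 ≤ mixv d A l (t : ℕ) x (l.get t) := (hf.1 (l.get t)).1
      have heq : mixv d A l (t : ℕ) x (l.get t) = xval d A l t := by
        rw [hxv]
        have : (mixv d A l (t : ℕ) x (l.get t)) ≤ 0 := by exact_mod_cast hle0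
        omega
      rw [← heq, Function.update_eq_self]
      exact hf
    · -- monotone move up to d
      have hxv : xval d A l t = (d : ℤ) := by
        unfold xval; rw [if_neg hpos, if_neg hn]
      rw [hxv]
      push_neg at hn
      refine feas_update hf (l.get t) (d : ℤ) ⟨by positivity, le_refl _⟩ (fun i => ?_)
      have h1 : 0 ≤ A i (l.get t) := hn i
      have h2 : (mixv d A l (t : ℕ) x (l.get t) : ℝ) ≤ (d : ℝ) := by
        exact_mod_cast (hf.1 (l.get t)).2
      push_cast
      nlinarith [mul_nonneg h1 (sub_nonneg.2 h2)]

lemma retract_feas {A : Matrix (Fin m) (Fin n) ℝ} {l : List (Fin n)} {br : Fin m → ℝ}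
    (hnd : l.Nodup)
    (helim : ∀ t : Fin l.length, CanElim (elimCols A (l.take (t : ℕ)).toFinset) (l.get t))
    (x : Fin n → ℤ) (hx : Feas d A (bb d A l br) x) :
    Feas d A (bb d A l br) (fun j => if j ∈ l.toFinset then xhat d A l j else x j) := by
  have hmain : ∀ t, t ≤ l.length → Feas d A (bb d A l br) (mixv d A l t x) := by
    intro t
    induction t with
    | zero => intro _; rw [mixv_zero]; exact hx
    | succ t ih =>
      intro ht
      exact step_feas hnd helim ⟨t, lt_of_lt_of_le (Nat.lt_succ_self t) ht⟩ x
        (ih (Nat.le_of_succ_le ht))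
  have hfin : mixv d A l l.length x
      = fun j => if j ∈ l.toFinset then xhat d A l j else x j := by
    funext j; unfold mixv; rw [List.take_length]
  rw [← hfin]
  exact hmain l.length le_rfl

open Classical in
/-- Extension of a reduced solution by the target values on the eliminated columns. -/
noncomputable def extv (d : ℕ) (A : Matrix (Fin m) (Fin n) ℝ) (l : List (Fin n))
    (zr : {j : Fin n // j ∉ l.toFinset} → ℤ) (j : Fin n) : ℤ :=
  if hj : j ∈ l.toFinset then xhat d A l j else zr ⟨j, hj⟩

lemma ext_feas {A : Matrix (Fin m) (Fin n) ℝ} {l : List (Fin n)} {br : Fin m → ℝ}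
    {zr : {j : Fin n // j ∉ l.toFinset} → ℤ}
    (hz : Feas d (fun i (j : {j : Fin n // j ∉ l.toFinset}) => A i j.1) br zr) :
    Feas d A (bb d A l br) (extv d A l zr) := by
  classical
  constructor
  · intro j
    unfold extv
    split_ifs with hj
    · exact xhat_bounds A l j
    · exact hz.1 ⟨j, hj⟩
  · intro i
    have hsplit : ∑ j, A i j * (extv d A l zr j : ℝ)
        = (∑ j ∈ l.toFinset, A i j * (xhat d A l j : ℝ))
          + ∑ j ∈ l.toFinsetᶜ, A i j * (extv d A l zr j : ℝ) := by
      rw [← Finset.sum_add_sum_compl l.toFinset (fun j => A i j * (extv d A l zr j : ℝ))]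
      congr 1
      exact Finset.sum_congr rfl fun j hj => by unfold extv; rw [dif_pos hj]
    have hc : ∑ j ∈ l.toFinsetᶜ, A i j * (extv d A l zr j : ℝ)
        = ∑ j : {j : Fin n // j ∉ l.toFinset}, A i j.1 * (zr j : ℝ) := by
      rw [Finset.sum_subtype l.toFinsetᶜ (fun j => Finset.mem_compl)
        (fun j => A i j * (extv d A l zr j : ℝ))]
      exact Finset.sum_congr rfl fun j _ => by unfold extv; rw [dif_neg j.2]
    rw [hsplit, hc]
    unfold bb
    split_ifs with hrow
    · have hzero : ∑ j : {j : Fin n // j ∉ l.toFinset}, A i j.1 * (zr j : ℝ) = 0 :=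
        Finset.sum_eq_zero fun j _ => by
          rw [hrow j.1 (fun hh => j.2 (List.mem_toFinset.2 hh)), zero_mul]
      rw [hzero]
      linarith
    · have := hz.2 i
      linarith

lemma proj_feas {A : Matrix (Fin m) (Fin n) ℝ} {l : List (Fin n)} {br : Fin m → ℝ}
    (hbr : ∀ i, (∀ j, j ∉ l → A i j = 0) → br i ≤ 0) {x : Fin n → ℤ}
    (hx : Feas d A (bb d A l br) x) (hxE : ∀ j ∈ l.toFinset, x j = xhat d A l j) :
    Feas d (fun i (j : {j : Fin n // j ∉ l.toFinset}) => A i j.1) br (fun j => x j.1) := by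
  classical
  constructor
  · intro j; exact hx.1 j.1
  · intro i
    have h2 := hx.2 i
    rw [← Finset.sum_add_sum_compl l.toFinset (fun j => A i j * (x j : ℝ))] at h2
    have e1 : ∑ j ∈ l.toFinset, A i j * (x j : ℝ)
        = ∑ j ∈ l.toFinset, A i j * (xhat d A l j : ℝ) :=
      Finset.sum_congr rfl fun j hj => by rw [hxE j hj]
    have e2 : ∑ j ∈ l.toFinsetᶜ, A i j * (x j : ℝ)
        = ∑ j : {j : Fin n // j ∉ l.toFinset}, A i j.1 * (x j.1 : ℝ) :=
      Finset.sum_subtype l.toFinsetᶜ (fun j => Finset.mem_compl)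
        (fun j => A i j * (x j : ℝ))
    rw [e1, e2] at h2
    unfold bb at h2
    split_ifs at h2 with hrow
    · have hzero : ∑ j : {j : Fin n // j ∉ l.toFinset}, A i j.1 * (x j.1 : ℝ) = 0 :=
        Finset.sum_eq_zero fun j _ => by
          rw [hrow j.1 (fun hh => j.2 (List.mem_toFinset.2 hh)), zero_mul]
      have := hbr i hrow
      calc br i ≤ 0 := this
      _ = ∑ j : {j : Fin n // j ∉ l.toFinset}, A i j.1 * (x j.1 : ℝ) := hzero.symm
    · linarith

lemma hamming_one_iff {ι : Type} [Fintype ι] [DecidableEq ι] {u v : ι → ℤ} :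
    hammingDist u v = 1 ↔ ∃ j0, u j0 ≠ v j0 ∧ ∀ j', j' ≠ j0 → u j' = v j' := by
  classical
  rw [show hammingDist u v = (Finset.univ.filter fun i => u i ≠ v i).card from rfl,
    Finset.card_eq_one]
  constructor
  · rintro ⟨j0, hj0⟩
    have h1 : ∀ j, u j ≠ v j ↔ j = j0 := by
      intro j
      rw [← Finset.mem_singleton, ← hj0]
      simp
    exact ⟨j0, (h1 j0).2 rfl, fun j' hne => by
      by_contra hc; exact hne ((h1 j').1 hc)⟩
  · rintro ⟨j0, hne, hag⟩
    refine ⟨j0, ?_⟩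
    ext j
    simp only [Finset.mem_filter, Finset.mem_univ, true_and, Finset.mem_singleton]
    constructor
    · intro hc
      by_contra hj
      exact hc (hag j hj)
    · rintro rfl
      exact hne

lemma rtg_map {α β : Type} {r : α → α → Prop} {r' : β → β → Prop} (f : α → β)
    (hf : ∀ a b, r a b → Relation.ReflTransGen r' (f a) (f b)) {a b : α}
    (h : Relation.ReflTransGen r a b) : Relation.ReflTransGen r' (f a) (f b) := by
  induction h with
  | refl => exact Relation.ReflTransGen.refl
  | tail _ h2 ih => exact ih.trans (hf _ _ h2)

end Aux

theorem stmt12 (d : ℕ) (hd : 0 < d) (m n : ℕ) (A : Matrix (Fin m) (Fin n) ℝ)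
    (E : Finset (Fin n)) (hE : GreedyElimSet A E)
    (br : Fin m → ℝ)
    (h : ¬ SolConnected d (fun i (j : {j : Fin n // j ∉ E}) => A i j.1) br) :
    ∃ b : Fin m → ℝ, ¬ SolConnected d A b := by
  classical
  obtain ⟨⟨l, hnd, hlE, helim⟩, -⟩ := hE
  subst hlE
  unfold SolConnected at h
  push_neg at h
  obtain ⟨xr, yr, hxr, hyr, hnpath⟩ := h
  -- rows supported on the eliminated columns have nonpositive reduced rhs
  have hbr : ∀ i, (∀ j, j ∉ l → A i j = 0) → br i ≤ 0 := by
    intro i hi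
    have h2 := hxr.2 i
    have h3 : ∑ j : {j : Fin n // j ∉ l.toFinset}, A i j.1 * (xr j : ℝ) = 0 :=
      Finset.sum_eq_zero fun j _ => by
        rw [hi j.1 (fun hh => j.2 (List.mem_toFinset.2 hh)), zero_mul]
    rw [h3] at h2
    exact h2
  refine ⟨bb d A l br, fun hconn => hnpath ?_⟩
  set X := extv d A l xr with hX
  set Y := extv d A l yr with hY
  have hXf : Feas d A (bb d A l br) X := ext_feas hxr
  have hYf : Feas d A (bb d A l br) Y := ext_feas hyr
  have hpath := hconn X Y hXf hYf
  -- reduced feasibility of the projection of any feasible point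
  have hproj : ∀ u, Feas d A (bb d A l br) u →
      Feas d (fun i (j : {j : Fin n // j ∉ l.toFinset}) => A i j.1) br
        (fun j => u j.1) := by
    intro u hu
    have hr := retract_feas hnd helim u hu
    have := proj_feas hbr hr (fun j hj => by simp [hj])
    have heq : (fun j : {j : Fin n // j ∉ l.toFinset} =>
        (if j.1 ∈ l.toFinset then xhat d A l j.1 else u j.1)) = fun j => u j.1 := by
      funext j; rw [if_neg j.2]
    rwa [heq] at this
  -- every big step maps to a reduced path
  have hstep : ∀ u v, SolStep d A (bb d A l br) u v →
      Relation.ReflTransGen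
        (SolStep d (fun i (j : {j : Fin n // j ∉ l.toFinset}) => A i j.1) br)
        (fun j => u j.1) (fun j => v j.1) := by
    intro u v huv
    obtain ⟨hu, hv, h1⟩ := huv
    obtain ⟨j0, hne, hag⟩ := hamming_one_iff.1 h1
    by_cases hj0 : j0 ∈ l.toFinset
    · have heq : (fun j : {j : Fin n // j ∉ l.toFinset} => u j.1)
          = fun j => v j.1 := funext fun j => hag j.1 (fun hh => j.2 (hh ▸ hj0))
      rw [heq]
    · refine Relation.ReflTransGen.single ⟨hproj u hu, hproj v hv, ?_⟩
      refine hamming_one_iff.2 ⟨⟨j0, hj0⟩, hne, fun j' hne' => ?_⟩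
      exact hag j'.1 (fun hh => hne' (Subtype.ext hh))
  have hmapped : Relation.ReflTransGen
      (SolStep d (fun i (j : {j : Fin n // j ∉ l.toFinset}) => A i j.1) br)
      (fun j : {j : Fin n // j ∉ l.toFinset} => X j.1)
      (fun j : {j : Fin n // j ∉ l.toFinset} => Y j.1) :=
    rtg_map (f := fun w => fun j : {j : Fin n // j ∉ l.toFinset} => w j.1) hstep hpath
  have hXp : (fun j : {j : Fin n // j ∉ l.toFinset} => X j.1) = xr := by
    funext j
    rw [hX]
    unfold extv
    rw [dif_neg j.2]
  have hYp : (fun j : {j : Fin n // j ∉ l.toFinset} => Y j.1) = yr := by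
    funext j
    rw [hY]
    unfold extv
    rw [dif_neg j.2]
  rwa [hXp, hYp] at hmapped
end

section
/- Let A ∈ ℝ^{m×n}, E ⊆ [n] a greedily eliminated set of columns as in the Expansion Lemma, Δ = [n] \ E, and A^r the submatrix on columns Δ. Define ζ' ∈ D^E by ζ'_k = d if column k was eliminated by the negative rule and ζ'_k = 0 if by the positive rule, and set b = b^r + b^e where b^e_i = Σ_{k∈E} a_{ik} ζ'_k. Then for every z ∈ D^Δ with A^r z ≥ b^r, the combined vector (z, ζ') ∈ D^n satisfies A(z,ζ') ≥ b. -/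
open Finset

theorem stmt13 (d : ℕ) (hd : 0 < d) (m n : ℕ) (A : Matrix (Fin m) (Fin n) ℝ)
    (E : Finset (Fin n)) (l : List (Fin n)) (hnd : l.Nodup) (hlE : l.toFinset = E)
    (hmax : ∀ j ∉ E, ¬ CanElim (elimCols A E) j)
    (rule : Fin n → Bool)
    (hrule : ∀ t : Fin l.length,
      if rule (l.get t) then
        ∀ i, 0 < elimCols A (l.take t).toFinset i (l.get t) →
          ∀ j' ≠ l.get t, elimCols A (l.take t).toFinset i j' = 0
      else
        ∀ i, elimCols A (l.take t).toFinset i (l.get t) < 0 →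
          ∀ j' ≠ l.get t, elimCols A (l.take t).toFinset i j' = 0)
    (zeta : Fin n → ℤ) (hzeta : ∀ k ∈ E, zeta k = if rule k then 0 else (d : ℤ))
    (br : Fin m → ℝ) (b : Fin m → ℝ)
    (hb : ∀ i, b i = br i + ∑ k ∈ E, A i k * (zeta k : ℝ))
    (z : {j : Fin n // j ∉ E} → ℤ) (hzD : InD d z)
    (hzf : ∀ i, br i ≤ ∑ j : {j : Fin n // j ∉ E}, A i j.1 * (z j : ℝ)) :
    Feas d A b (fun j => if hj : j ∈ E then zeta j else z ⟨j, hj⟩) := by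
  constructor
  · intro j
    by_cases hj : j ∈ E
    · simp only [hj, dif_pos]
      rw [hzeta j hj]
      split
      · exact ⟨le_refl 0, by exact_mod_cast Nat.zero_le d⟩
      · exact ⟨by exact_mod_cast Nat.zero_le d, le_refl _⟩
    · simp only [hj, dif_neg, not_false_iff]
      exact hzD ⟨j, hj⟩
  · intro i
    rw [hb i]
    have hsplit : ∑ j, A i j * ((if hj : j ∈ E then zeta j else z ⟨j, hj⟩ : ℤ) : ℝ)
        = ∑ j ∈ E, A i j * ((if hj : j ∈ E then zeta j else z ⟨j, hj⟩ : ℤ) : ℝ)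
          + ∑ j ∈ Eᶜ, A i j * ((if hj : j ∈ E then zeta j else z ⟨j, hj⟩ : ℤ) : ℝ) :=
      (Finset.sum_add_sum_compl E _).symm
    rw [hsplit]
    have h1 : ∑ j ∈ E, A i j * ((if hj : j ∈ E then zeta j else z ⟨j, hj⟩ : ℤ) : ℝ)
        = ∑ k ∈ E, A i k * (zeta k : ℝ) := by
      apply Finset.sum_congr rfl
      intro j hj
      rw [dif_pos hj]
    have h2 : ∑ j ∈ Eᶜ, A i j * ((if hj : j ∈ E then zeta j else z ⟨j, hj⟩ : ℤ) : ℝ)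
        = ∑ j : {j : Fin n // j ∉ E}, A i j.1 * (z j : ℝ) := by
      rw [Finset.sum_subtype Eᶜ (fun j => Finset.mem_compl)
        (fun j => A i j * ((if hj : j ∈ E then zeta j else z ⟨j, hj⟩ : ℤ) : ℝ))]
      apply Finset.sum_congr rfl
      intro j _
      rw [dif_neg j.2]
    rw [h1, h2]
    linarith [hzf i]
end

section
/- Let A ∈ ℝ^{m×n}, E ⊆ [n] a greedily eliminated column set, Δ = [n] \ E, A^r the submatrix on columns Δ, b^r ∈ ℝ^m with R(A^r,b^r) nonempty, and b = b^r + b^e with b^e_i = Σ_{k∈E} a_{ik} d(1-x^e_k), where x^e_k = 1 if column k was eliminated by the positive rule and 0 otherwise. Then for every z ∈ D^Δ with A^r z ≱ b^r (i.e., z infeasible for (A^r,b^r)) and every ζ ∈ D^E, the combined vector (z,ζ) is infeasible for (A,b). -/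
open Finset

lemma aux_not_mem_take {α : Type} [DecidableEq α] (l : List α) (hnd : l.Nodup)
    (t : Fin l.length) : l.get t ∉ (l.take t).toFinset := by
  simp only [List.mem_toFinset]
  intro h
  have hd : l.get t ∈ l.drop t := by
    have h0 : (0:ℕ) < (l.drop (t:ℕ)).length := by
      rw [List.length_drop]; omega
    have h1 := List.getElem_drop (i := (t:ℕ)) (j := 0) (h := h0)
    simp only [Nat.add_zero] at h1
    rw [List.get_eq_getElem, ← h1]
    exact List.getElem_mem _
  exact List.disjoint_take_drop hnd (le_refl t) h hd

theorem stmt14 (d : ℕ) (hd : 0 < d) (m n : ℕ) (A : Matrix (Fin m) (Fin n) ℝ)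
    (E : Finset (Fin n)) (l : List (Fin n)) (hnd : l.Nodup) (hlE : l.toFinset = E)
    (hmax : ∀ j ∉ E, ¬ CanElim (elimCols A E) j)
    (rule : Fin n → Bool)
    (hrule : ∀ t : Fin l.length,
      if rule (l.get t) then
        ∀ i, 0 < elimCols A (l.take t).toFinset i (l.get t) →
          ∀ j' ≠ l.get t, elimCols A (l.take t).toFinset i j' = 0
      else
        ∀ i, elimCols A (l.take t).toFinset i (l.get t) < 0 →
          ∀ j' ≠ l.get t, elimCols A (l.take t).toFinset i j' = 0)
    (xe : Fin n → ℤ) (hxe : ∀ k ∈ E, xe k = if rule k then 1 else 0)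
    (br : Fin m → ℝ)
    (hne : ∃ z0 : {j : Fin n // j ∉ E} → ℤ, InD d z0 ∧
      ∀ i, br i ≤ ∑ j : {j : Fin n // j ∉ E}, A i j.1 * (z0 j : ℝ))
    (b : Fin m → ℝ)
    (hb : ∀ i, b i = br i + ∑ k ∈ E, A i k * ((d : ℝ) * (1 - (xe k : ℝ))))
    (z : {j : Fin n // j ∉ E} → ℤ) (hzD : InD d z)
    (hzinf : ¬ ∀ i, br i ≤ ∑ j : {j : Fin n // j ∉ E}, A i j.1 * (z j : ℝ))
    (zeta : Fin n → ℤ) (hzetaD : InD d zeta) :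
    ¬ Feas d A b (fun j => if hj : j ∈ E then zeta j else z ⟨j, hj⟩) := by
  rintro ⟨hxD, hxF⟩
  apply hzinf
  intro i
  have htakeE : ∀ (t : Fin l.length) (j : Fin n), j ∈ (l.take t).toFinset → j ∈ E := by
    intro t j hj
    rw [← hlE, List.mem_toFinset]
    exact List.mem_of_mem_take (List.mem_toFinset.mp hj)
  by_cases htrig : ∃ t : Fin l.length,
      (rule (l.get t) = true ∧ 0 < A i (l.get t)) ∨
      (rule (l.get t) = false ∧ A i (l.get t) < 0)
  · -- row i triggers: it vanishes on Δ, so use the feasibility witness z0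
    obtain ⟨t, ht⟩ := htrig
    have hkE : l.get t ∈ E := by
      rw [← hlE, List.mem_toFinset]; exact List.get_mem l t
    have hknt : l[(t:ℕ)] ∉ l.take (t:ℕ) := by
      simpa using aux_not_mem_take l hnd t
    have hzero : ∀ j : Fin n, j ∉ E → A i j = 0 := by
      intro j hj
      have hjne : j ≠ l.get t := fun h => hj (h ▸ hkE)
      have hjnt : j ∉ l.take (t:ℕ) := fun h => hj (htakeE t j (List.mem_toFinset.mpr h))
      have hr := hrule t
      rcases ht with ⟨hb1, hpos⟩ | ⟨hb1, hneg⟩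
      · rw [hb1, if_pos rfl] at hr
        have := hr i (by simpa [elimCols, hknt] using hpos) j hjne
        simpa [elimCols, hjnt] using this
      · rw [hb1] at hr; simp only [Bool.false_eq_true, if_false] at hr
        have := hr i (by simpa [elimCols, hknt] using hneg) j hjne
        simpa [elimCols, hjnt] using this
    obtain ⟨z0, _, hz0F⟩ := hne
    have h1 : ∑ j : {j : Fin n // j ∉ E}, A i j.1 * (z0 j : ℝ) = 0 :=
      Finset.sum_eq_zero fun j _ => by rw [hzero j.1 j.2, zero_mul]
    have h2 : ∑ j : {j : Fin n // j ∉ E}, A i j.1 * (z j : ℝ) = 0 :=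
      Finset.sum_eq_zero fun j _ => by rw [hzero j.1 j.2, zero_mul]
    rw [h2]
    have := hz0F i
    rw [h1] at this
    exact this
  · push_neg at htrig
    have hsign : ∀ k ∈ E, (rule k = true → A i k ≤ 0) ∧ (rule k = false → 0 ≤ A i k) := by
      intro k hk
      rw [← hlE, List.mem_toFinset] at hk
      obtain ⟨t, ht⟩ := List.get_of_mem hk
      subst ht
      exact htrig t
    have hsum : ∑ k ∈ E, A i k * (zeta k : ℝ) ≤
        ∑ k ∈ E, A i k * ((d : ℝ) * (1 - (xe k : ℝ))) := by
      apply Finset.sum_le_sum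
      intro k hk
      obtain ⟨hp, hn⟩ := hsign k hk
      have hxek := hxe k hk
      have hz0 : (0:ℝ) ≤ (zeta k : ℝ) := by exact_mod_cast (hzetaD k).1
      have hzd : (zeta k : ℝ) ≤ (d : ℝ) := by exact_mod_cast (hzetaD k).2
      cases hrk : rule k with
      | false =>
        rw [hxek, hrk, if_neg (by simp)]
        push_cast
        have := hn hrk
        nlinarith
      | true =>
        rw [hxek, hrk, if_pos rfl]
        push_cast
        have := hp hrk
        nlinarith
    have hsplit : ∑ j, A i j * ((if hj : j ∈ E then zeta j else z ⟨j, hj⟩ : ℤ) : ℝ) =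
        ∑ k ∈ E, A i k * (zeta k : ℝ) +
        ∑ j : {j : Fin n // j ∉ E}, A i j.1 * (z j : ℝ) := by
      rw [← Finset.sum_add_sum_compl E]
      congr 1
      · exact Finset.sum_congr rfl fun k hk => by rw [dif_pos hk]
      · rw [Finset.sum_subtype (p := fun j : Fin n => j ∉ E) Eᶜ (fun x => by simp)
          (fun j => A i j * ((if hj : j ∈ E then zeta j else z ⟨j, hj⟩ : ℤ) : ℝ))]
        apply Finset.sum_congr rfl
        intro j _
        rw [dif_neg j.2]
    have hfi := hxF i
    rw [hsplit, hb i] at hfi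
    linarith
end

section
/- Let A ∈ ℝ^{3×n} be a matrix with three rows that cannot be eliminated at any column, and suppose there exist i_1, i_2 ∈ [3] with |{ j : sgn(a_{i_1 j}) = -sgn(a_{i_2 j}) ≠ 0 }| ≥ 2. Then for every positive integer d there exists b ∈ ℝ^3 such that the solution graph of (A,b) over D = {0,...,d} is not connected. -/
open Finset

namespace S15

variable {n : ℕ}

def Grid (d : ℕ) (Λ : Finset (Fin n)) (w : Fin n → ℤ) : Prop :=
  (∀ j ∈ Λ, 0 ≤ w j ∧ w j ≤ (d:ℤ)) ∧ ∀ j ∉ Λ, w j = 0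

lemma sum_diff_single (Λ : Finset (Fin n)) (q : Fin n → ℝ) (v w : Fin n → ℤ)
    (j0 : Fin n) (hj0 : j0 ∈ Λ) (hagree : ∀ j ∈ Λ, j ≠ j0 → v j = w j) :
    (∑ j ∈ Λ, q j * (v j : ℝ)) - (∑ j ∈ Λ, q j * (w j : ℝ))
      = q j0 * ((v j0 : ℝ) - (w j0 : ℝ)) := by
  rw [← Finset.sum_sub_distrib, Finset.sum_eq_single_of_mem j0 hj0]
  · ring
  · intro j hj hne
    rw [hagree j hj hne]; ring

lemma sum_mono (Λ : Finset (Fin n)) (q : Fin n → ℝ) (hq : ∀ j ∈ Λ, 0 < q j)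
    (v w : Fin n → ℤ) (h : ∀ j ∈ Λ, v j ≤ w j) :
    (∑ j ∈ Λ, q j * (v j : ℝ)) ≤ ∑ j ∈ Λ, q j * (w j : ℝ) := by
  apply Finset.sum_le_sum
  intro j hj
  have h' : (v j : ℝ) ≤ w j := by exact_mod_cast h j hj
  exact mul_le_mul_of_nonneg_left h' (hq j hj).le

lemma core (d : ℕ) (hd : 0 < d) (Λ : Finset (Fin n)) (r c : Fin n → ℝ)
    (hr : ∀ j ∈ Λ, 0 < r j) (hc : ∀ j ∈ Λ, 0 < c j)
    (j1 j2 : Fin n) (hj1 : j1 ∈ Λ) (hj2 : j2 ∈ Λ) (hne : j1 ≠ j2) :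
    ∃ (ρ τ : ℝ) (a b : Fin n → ℤ),
      (∀ j ∈ Λ, 0 ≤ a j ∧ a j ≤ (d:ℤ)) ∧ (∀ j ∈ Λ, 0 ≤ b j ∧ b j ≤ (d:ℤ)) ∧
      ρ ≤ (∑ j ∈ Λ, r j * (a j : ℝ)) ∧ (∑ j ∈ Λ, c j * (a j : ℝ)) ≤ τ ∧
      ρ ≤ (∑ j ∈ Λ, r j * (b j : ℝ)) ∧ (∑ j ∈ Λ, c j * (b j : ℝ)) ≤ τ ∧
      (∃ j ∈ Λ, a j ≠ b j) ∧
      (∀ w : Fin n → ℤ, (∀ j ∈ Λ, 0 ≤ w j ∧ w j ≤ (d:ℤ)) →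
        ρ ≤ (∑ j ∈ Λ, r j * (w j : ℝ)) → (∑ j ∈ Λ, c j * (w j : ℝ)) ≤ τ →
        ∀ j0 ∈ Λ, (∀ j ∈ Λ, j ≠ j0 → w j = a j) → w j0 = a j0) := by
  classical
  set R : (Fin n → ℤ) → ℝ := fun w => ∑ j ∈ Λ, r j * (w j : ℝ) with hRdef
  set C : (Fin n → ℤ) → ℝ := fun w => ∑ j ∈ Λ, c j * (w j : ℝ) with hCdef
  by_cases hA : ∃ u v : Fin n → ℤ, Grid d Λ u ∧ Grid d Λ v ∧
      (∃ j ∈ Λ, u j ≠ v j) ∧ R u ≤ R v ∧ C v ≤ C u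
  · obtain ⟨u, v, hu, hv, hdiff, hRuv, hCvu⟩ := hA
    refine ⟨R u, C u, u, v, hu.1, hv.1, le_refl _, le_refl _, hRuv, hCvu, hdiff, ?_⟩
    intro w hwb hwR hwC j0 hj0 hagree
    have h1 : R w - R u = r j0 * ((w j0 : ℝ) - (u j0 : ℝ)) :=
      sum_diff_single Λ r w u j0 hj0 hagree
    have h2 : C w - C u = c j0 * ((w j0 : ℝ) - (u j0 : ℝ)) :=
      sum_diff_single Λ c w u j0 hj0 hagree
    have hd1 : 0 ≤ r j0 * ((w j0 : ℝ) - (u j0 : ℝ)) := by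
      rw [← h1]; linarith [hwR]
    have hd2 : c j0 * ((w j0 : ℝ) - (u j0 : ℝ)) ≤ 0 := by
      rw [← h2]; linarith [hwC]
    have hpos := hr j0 hj0
    have hpos' := hc j0 hj0
    have hge : (0:ℝ) ≤ (w j0 : ℝ) - (u j0 : ℝ) := nonneg_of_mul_nonneg_right ?_ hpos
    · have hle : (w j0 : ℝ) - (u j0 : ℝ) ≤ 0 := by
        nlinarith
      have : (w j0 : ℝ) = (u j0 : ℝ) := by linarith
      exact_mod_cast this
    · exact hd1
  · have keyB : ∀ u v : Fin n → ℤ, Grid d Λ u → Grid d Λ v →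
        (∃ j ∈ Λ, u j ≠ v j) → R u ≤ R v → C u < C v := by
      intro u v hu hv hdiff hle
      by_contra hcon
      push_neg at hcon
      exact hA ⟨u, v, hu, hv, hdiff, hle, hcon⟩
    set E : (Fin n → Fin (d+1)) → (Fin n → ℤ) := fun g j => if j ∈ Λ then ((g j : ℕ) : ℤ) else 0
      with hEdef
    have hGE : ∀ g, Grid d Λ (E g) := by
      intro g
      constructor
      · intro j hj
        simp only [hEdef, if_pos hj]
        exact ⟨Int.ofNat_nonneg _, by exact_mod_cast Nat.lt_succ_iff.mp (g j).isLt⟩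
      · intro j hj; simp [hEdef, hj]
    have hrep : ∀ u, Grid d Λ u → ∃ g, E g = u := by
      intro u hu
      refine ⟨fun j => if hj : j ∈ Λ then ⟨(u j).toNat, ?_⟩ else 0, ?_⟩
      · exact Nat.lt_succ_iff.mpr (Int.toNat_le.mpr (hu.1 j hj).2)
      · funext j
        by_cases hj : j ∈ Λ
        · simp only [hEdef, if_pos hj, dif_pos hj]
          exact Int.toNat_of_nonneg (hu.1 j hj).1
        · simp [hEdef, hj, hu.2 j hj]
    set w1 : Fin n → ℤ := fun j => if j = j1 then (d:ℤ) else 0 with hw1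
    set w2 : Fin n → ℤ := fun j => if j = j2 then (d:ℤ) else 0 with hw2
    have hdz : (0:ℤ) < (d:ℤ) := by exact_mod_cast hd
    have hGw1 : Grid d Λ w1 := by
      constructor
      · intro j hj; simp only [hw1]; split <;> omega
      · intro j hj
        have : j ≠ j1 := fun h => hj (h ▸ hj1)
        simp [hw1, this]
    have hGw2 : Grid d Λ w2 := by
      constructor
      · intro j hj; simp only [hw2]; split <;> omega
      · intro j hj
        have : j ≠ j2 := fun h => hj (h ▸ hj2)
        simp [hw2, this]
    have h12 : ∃ j ∈ Λ, w2 j < w1 j := ⟨j1, hj1, by simp [hw1, hw2, hne, hdz, hd]⟩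
    have h21 : ∃ j ∈ Λ, w1 j < w2 j := ⟨j2, hj2, by simp [hw1, hw2, Ne.symm hne, hdz, hd]⟩
    have hRne : R w1 ≠ R w2 := by
      intro hEq
      have hd1 : ∃ j ∈ Λ, w1 j ≠ w2 j := by
        obtain ⟨j, hj, hlt⟩ := h12; exact ⟨j, hj, (ne_of_lt hlt).symm⟩
      have hd2 : ∃ j ∈ Λ, w2 j ≠ w1 j := by
        obtain ⟨j, hj, hlt⟩ := h12; exact ⟨j, hj, ne_of_lt hlt⟩
      have hx1 := keyB w1 w2 hGw1 hGw2 hd1 (le_of_eq hEq)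
      have hx2 := keyB w2 w1 hGw2 hGw1 hd2 (le_of_eq hEq.symm)
      linarith
    set S : Finset ((Fin n → Fin (d+1)) × (Fin n → Fin (d+1))) :=
      Finset.univ.filter (fun p =>
        (∃ j ∈ Λ, E p.2 j < E p.1 j) ∧ (∃ j ∈ Λ, E p.1 j < E p.2 j) ∧ R (E p.1) < R (E p.2))
      with hSdef
    have hSne : S.Nonempty := by
      obtain ⟨g1, hg1⟩ := hrep w1 hGw1
      obtain ⟨g2, hg2⟩ := hrep w2 hGw2
      rcases hRne.lt_or_gt with hlt | hlt
      · refine ⟨(g1, g2), ?_⟩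
        simp only [hSdef, Finset.mem_filter, Finset.mem_univ, true_and]
        rw [hg1, hg2]
        exact ⟨h12, h21, hlt⟩
      · refine ⟨(g2, g1), ?_⟩
        simp only [hSdef, Finset.mem_filter, Finset.mem_univ, true_and]
        rw [hg1, hg2]
        exact ⟨h21, h12, hlt⟩
    obtain ⟨p, hpS, hpmin⟩ := Finset.exists_min_image S (fun p => R (E p.2) - R (E p.1)) hSne
    simp only [hSdef, Finset.mem_filter, Finset.mem_univ, true_and] at hpS
    obtain ⟨hba, hab, hRab⟩ := hpS
    set a : Fin n → ℤ := E p.1 with hadef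
    set b : Fin n → ℤ := E p.2 with hbdef
    have hGa : Grid d Λ a := hGE p.1
    have hGb : Grid d Λ b := hGE p.2
    have hcons : ∀ u, Grid d Λ u → ¬ (R a < R u ∧ R u < R b) := by
      rintro u hu ⟨hlo, hhi⟩
      obtain ⟨g, hg⟩ := hrep u hu
      have hex1 : ∃ j ∈ Λ, a j < u j := by
        by_contra hx
        push_neg at hx
        exact absurd (sum_mono Λ r hr u a hx) (not_le.mpr hlo)
      have hex2 : ∃ j ∈ Λ, u j < b j := by
        by_contra hx
        push_neg at hx
        exact absurd (sum_mono Λ r hr b u hx) (not_le.mpr hhi)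
      by_cases hI : ∃ j ∈ Λ, u j < a j
      · have hmem : (p.1, g) ∈ S := by
          simp only [hSdef, Finset.mem_filter, Finset.mem_univ, true_and]
          rw [hg]
          exact ⟨hI, hex1, hlo⟩
        have hmin := hpmin (p.1, g) hmem
        rw [hg, ← hadef] at hmin
        linarith
      · push_neg at hI
        by_cases hI' : ∃ j ∈ Λ, b j < u j
        · have hmem : (g, p.2) ∈ S := by
            simp only [hSdef, Finset.mem_filter, Finset.mem_univ, true_and]
            rw [hg]
            exact ⟨hI', hex2, hhi⟩
          have hmin := hpmin (g, p.2) hmem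
          rw [hg, ← hbdef] at hmin
          linarith
        · push_neg at hI'
          obtain ⟨j, hj, hlt⟩ := hba
          have := hI j hj
          have := hI' j hj
          omega
    have hCab : C a < C b := by
      obtain ⟨j, hj, hlt⟩ := hab
      exact keyB a b hGa hGb ⟨j, hj, ne_of_lt hlt⟩ hRab.le
    refine ⟨R a, C b, a, b, hGa.1, hGb.1, le_refl _, hCab.le, hRab.le, le_refl _, ?_, ?_⟩
    · obtain ⟨j, hj, hlt⟩ := hab
      exact ⟨j, hj, ne_of_lt hlt⟩
    · intro w hwb hwR hwC j0 hj0 hagree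
      by_contra hne0
      set u' : Fin n → ℤ := fun j => if j ∈ Λ then w j else 0 with hu'def
      have hGu' : Grid d Λ u' := by
        constructor
        · intro j hj; simp only [hu'def, if_pos hj]; exact hwb j hj
        · intro j hj; simp [hu'def, hj]
      have hRu' : R u' = R w := by
        apply Finset.sum_congr rfl
        intro j hj; simp [hu'def, if_pos hj]
      have hCu' : C u' = C w := by
        apply Finset.sum_congr rfl
        intro j hj; simp [hu'def, if_pos hj]
      have hdua : ∃ j ∈ Λ, u' j ≠ a j := ⟨j0, hj0, by simp only [hu'def, if_pos hj0]; exact hne0⟩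
      have hdub : ∃ j ∈ Λ, b j ≠ u' j := by
        obtain ⟨ja, hja, hja'⟩ := hba
        obtain ⟨jb, hjb, hjb'⟩ := hab
        by_cases hcase : ja = j0
        · have hjbne : jb ≠ j0 := by
            intro h
            rw [h, ← hcase] at hjb'
            omega
          refine ⟨jb, hjb, ?_⟩
          simp only [hu'def, if_pos hjb]
          rw [hagree jb hjb hjbne]
          omega
        · refine ⟨ja, hja, ?_⟩
          simp only [hu'def, if_pos hja]
          rw [hagree ja hja hcase]
          omega
      have hRub : R u' < R b := by
        by_contra hx
        push_neg at hx
        have := keyB b u' hGb hGu' hdub hx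
        rw [hCu'] at this
        linarith
      have hRau : R a < R u' := by
        have hle : R a ≤ R u' := by rw [hRu']; exact hwR
        rcases hle.lt_or_eq with h | h
        · exact h
        · exfalso
          have hdau : ∃ j ∈ Λ, a j ≠ u' j := by
            obtain ⟨j, hj, hx⟩ := hdua; exact ⟨j, hj, hx.symm⟩
          have h1 := keyB a u' hGa hGu' hdau (le_of_eq h)
          have h2 := keyB u' a hGu' hGa hdua (le_of_eq h.symm)
          linarith
      exact hcons u' hGu' ⟨hRau, hRub⟩

end S15



theorem stmt15 (n : ℕ) (A : Matrix (Fin 3) (Fin n) ℝ) (h : ∀ j, ¬ CanElim A j)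
    (i1 i2 : Fin 3) (hcard : 2 ≤ (Lam A i1 i2).card) :
    ∀ d : ℕ, 0 < d → ∃ b : Fin 3 → ℝ, ¬ SolConnected d A b := by
  classical
  intro d hd
  set Λ := Lam A i1 i2 with hΛ
  have hsign : ∀ j ∈ Λ, (0 < A i1 j ∧ A i2 j < 0) ∨ (A i1 j < 0 ∧ 0 < A i2 j) := by
    intro j hj
    rw [hΛ, Lam, Finset.mem_filter] at hj
    obtain ⟨-, hs, hs0⟩ := hj
    rcases lt_trichotomy (A i1 j) 0 with h1 | h1 | h1
    · right
      refine ⟨h1, ?_⟩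
      rw [Real.sign_of_neg h1] at hs
      rcases lt_trichotomy (A i2 j) 0 with h2 | h2 | h2
      · rw [Real.sign_of_neg h2] at hs; norm_num at hs
      · rw [h2, Real.sign_zero] at hs; norm_num at hs
      · exact h2
    · exact absurd (by rw [h1, Real.sign_zero]) hs0
    · left
      refine ⟨h1, ?_⟩
      rw [Real.sign_of_pos h1] at hs
      rcases lt_trichotomy (A i2 j) 0 with h2 | h2 | h2
      · exact h2
      · rw [h2, Real.sign_zero] at hs; norm_num at hs
      · rw [Real.sign_of_pos h2] at hs; norm_num at hs
  have hout : ∀ j, j ∉ Λ → ¬((0 < A i1 j ∧ A i2 j < 0) ∨ (A i1 j < 0 ∧ 0 < A i2 j)) := by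
    intro j hj hx
    apply hj
    rw [hΛ, Lam, Finset.mem_filter]
    refine ⟨Finset.mem_univ _, ?_, ?_⟩
    · rcases hx with ⟨h1, h2⟩ | ⟨h1, h2⟩
      · rw [Real.sign_of_pos h1, Real.sign_of_neg h2]; try norm_num
      · rw [Real.sign_of_neg h1, Real.sign_of_pos h2]; try norm_num
    · rcases hx with ⟨h1, h2⟩ | ⟨h1, h2⟩
      · rw [Real.sign_of_pos h1]; norm_num
      · rw [Real.sign_of_neg h1]; norm_num
  have hii : i1 ≠ i2 := by
    intro hEq
    have hΛne : Λ.Nonempty := Finset.card_pos.mp (by omega)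
    obtain ⟨j, hj⟩ := hΛne
    rcases hsign j hj with ⟨h1, h2⟩ | ⟨h1, h2⟩ <;> rw [hEq] at h1 <;> linarith
  obtain ⟨j1, hj1, j2, hj2, hj12⟩ := Finset.one_lt_card.mp (by omega : 1 < Λ.card)
  set r : Fin n → ℝ := fun j => |A i1 j| with hrdef
  set c : Fin n → ℝ := fun j => |A i2 j| with hcdef
  have hr : ∀ j ∈ Λ, 0 < r j := by
    intro j hj
    rcases hsign j hj with ⟨h1, _⟩ | ⟨h1, _⟩
    · exact abs_pos.mpr (ne_of_gt h1)
    · exact abs_pos.mpr (ne_of_lt h1)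
  have hc : ∀ j ∈ Λ, 0 < c j := by
    intro j hj
    rcases hsign j hj with ⟨_, h2⟩ | ⟨_, h2⟩
    · exact abs_pos.mpr (ne_of_lt h2)
    · exact abs_pos.mpr (ne_of_gt h2)
  obtain ⟨ρ, τ, ga, gb, hga, hgb, hgaR, hgaC, hgbR, hgbC, hgdiff, hiso⟩ :=
    S15.core d hd Λ r c hr hc j1 j2 hj1 hj2 hj12
  set Y : (Fin n → ℤ) → (Fin n → ℤ) := fun x j => if 0 < A i1 j then x j else (d:ℤ) - x j with hY
  set K1 : ℝ := ∑ j ∈ Λ, (if 0 < A i1 j then 0 else A i1 j * d) with hK1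
  set K2 : ℝ := ∑ j ∈ Λ, (if 0 < A i1 j then 0 else A i2 j * d) with hK2
  set F : ℝ := ∑ j ∈ Λᶜ, max (A i1 j * d) 0 with hF
  set G : ℝ := ∑ j ∈ Λᶜ, max (A i2 j * d) 0 with hG
  set bLow : ℝ := -((∑ i, ∑ j, |A i j|) * d) with hbLow
  set β1 : ℝ := ρ + K1 + F with hβ1
  set β2 : ℝ := K2 + G - τ with hβ2
  set bv : Fin 3 → ℝ := fun i => if i = i1 then β1 else if i = i2 then β2 else bLow with hbv
  refine ⟨bv, ?_⟩
  have hbv1 : bv i1 = β1 := by simp [hbv]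
  have hbv2 : bv i2 = β2 := by simp [hbv, Ne.symm hii]
  -- identity for row i1 on Λ
  have hid1 : ∀ x : Fin n → ℤ,
      (∑ j ∈ Λ, A i1 j * (x j : ℝ)) = (∑ j ∈ Λ, r j * ((Y x j : ℤ) : ℝ)) + K1 := by
    intro x
    rw [hK1, ← Finset.sum_add_distrib]
    apply Finset.sum_congr rfl
    intro j hj
    by_cases hp : 0 < A i1 j
    · simp only [hY, if_pos hp, hrdef, abs_of_pos hp]
      ring
    · have hneg : A i1 j < 0 := by
        rcases hsign j hj with ⟨h1, _⟩ | ⟨h1, _⟩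
        · exact absurd h1 hp
        · exact h1
      simp only [hY, if_neg hp, hrdef, abs_of_neg hneg]
      push_cast
      ring
  have hid2 : ∀ x : Fin n → ℤ,
      (∑ j ∈ Λ, A i2 j * (x j : ℝ)) = -(∑ j ∈ Λ, c j * ((Y x j : ℤ) : ℝ)) + K2 := by
    intro x
    have hterm : ∀ j ∈ Λ, A i2 j * (x j : ℝ)
        = -(c j * ((Y x j : ℤ):ℝ)) + (if 0 < A i1 j then 0 else A i2 j * d) := by
      intro j hj
      by_cases hp : 0 < A i1 j
      · have hfneg : A i2 j < 0 := by
          rcases hsign j hj with ⟨_, h2⟩ | ⟨h1, _⟩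
          · exact h2
          · exact absurd h1 (asymm hp)
        simp only [hY, if_pos hp, hcdef, abs_of_neg hfneg]
        ring
      · have hfpos : 0 < A i2 j := by
          rcases hsign j hj with ⟨h1, _⟩ | ⟨_, h2⟩
          · exact absurd h1 hp
          · exact h2
        simp only [hY, if_neg hp, hcdef, abs_of_pos hfpos]
        push_cast
        ring
    rw [Finset.sum_congr rfl hterm, Finset.sum_add_distrib, hK2]
    congr 1
    rw [Finset.sum_neg_distrib]
  -- off-Λ upper bounds
  have hoffgen : ∀ (i : Fin 3) (x : Fin n → ℤ), InD d x →
      (∑ j ∈ Λᶜ, A i j * (x j : ℝ)) ≤ ∑ j ∈ Λᶜ, max (A i j * d) 0 := by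
    intro i x hx
    apply Finset.sum_le_sum
    intro j _
    rcases le_or_gt 0 (A i j) with hp | hp
    · have hxd : (x j : ℝ) ≤ (d:ℝ) := by exact_mod_cast (hx j).2
      exact le_trans (mul_le_mul_of_nonneg_left hxd hp) (le_max_left _ _)
    · have hx0 : (0:ℝ) ≤ (x j : ℝ) := by exact_mod_cast (hx j).1
      exact le_trans (mul_nonpos_of_nonpos_of_nonneg hp.le hx0) (le_max_right _ _)
  -- joint maximizer off Λ
  set z : Fin n → ℤ := fun j => if 0 < A i1 j ∨ (A i1 j = 0 ∧ 0 ≤ A i2 j) then (d:ℤ) else 0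
    with hz
  have hdR : (0:ℝ) ≤ (d:ℝ) := by positivity
  have hzval : ∀ j, j ∉ Λ →
      A i1 j * ((z j : ℤ) : ℝ) = max (A i1 j * d) 0 ∧
      A i2 j * ((z j : ℤ) : ℝ) = max (A i2 j * d) 0 := by
    intro j hj
    have hno := hout j hj
    rcases lt_trichotomy (A i1 j) 0 with hcase | hcase | hcase
    · have hnp : ¬ 0 < A i1 j := asymm hcase
      have hne0 : ¬(A i1 j = 0 ∧ 0 ≤ A i2 j) := fun hq => absurd hq.1 (ne_of_lt hcase)
      have hzj : z j = 0 := by simp [hz, hnp, hne0]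
      have hf : A i2 j ≤ 0 := by
        by_contra hfc
        push_neg at hfc
        exact hno (Or.inr ⟨hcase, hfc⟩)
      rw [hzj]
      constructor
      · rw [max_eq_right (mul_nonpos_of_nonpos_of_nonneg hcase.le hdR)]
        norm_num
      · rw [max_eq_right (mul_nonpos_of_nonpos_of_nonneg hf hdR)]
        norm_num
    · by_cases hf : 0 ≤ A i2 j
      · have hzj : z j = (d:ℤ) := by simp [hz, hcase, hf]
        rw [hzj]
        constructor
        · rw [hcase]; simp
        · rw [max_eq_left (mul_nonneg hf hdR)]; push_cast; ring
      · have hnp : ¬ 0 < A i1 j := by rw [hcase]; exact lt_irrefl 0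
        have hne0 : ¬(A i1 j = 0 ∧ 0 ≤ A i2 j) := fun hq => hf hq.2
        have hzj : z j = 0 := by simp [hz, hnp, hne0]
        push_neg at hf
        rw [hzj]
        constructor
        · rw [hcase]; simp
        · rw [max_eq_right (mul_nonpos_of_nonpos_of_nonneg hf.le hdR)]
          norm_num
    · have hf : 0 ≤ A i2 j := by
        by_contra hfc
        push_neg at hfc
        exact hno (Or.inl ⟨hcase, hfc⟩)
      have hzj : z j = (d:ℤ) := by simp [hz, hcase]
      rw [hzj]
      constructor
      · rw [max_eq_left (mul_nonneg hcase.le hdR)]; push_cast; ring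
      · rw [max_eq_left (mul_nonneg hf hdR)]; push_cast; ring
  -- the witness construction
  have hfeas : ∀ g : Fin n → ℤ, (∀ j ∈ Λ, 0 ≤ g j ∧ g j ≤ (d:ℤ)) →
      ρ ≤ (∑ j ∈ Λ, r j * (g j : ℝ)) → (∑ j ∈ Λ, c j * (g j : ℝ)) ≤ τ →
      Feas d A bv (fun j => if j ∈ Λ then (if 0 < A i1 j then g j else (d:ℤ) - g j) else z j) := by
    intro g hgB hgR hgC
    set x : Fin n → ℤ :=
      fun j => if j ∈ Λ then (if 0 < A i1 j then g j else (d:ℤ) - g j) else z j with hx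
    have hxz : ∀ j, j ∉ Λ → x j = z j := by intro j hj; simp [hx, hj]
    have hYx : ∀ j ∈ Λ, Y x j = g j := by
      intro j hj
      by_cases hp : 0 < A i1 j
      · simp [hY, hx, hj, hp]
      · simp only [hY, hx, if_pos hj, if_neg hp]
        ring
    have hInD : InD d x := by
      intro j
      by_cases hj : j ∈ Λ
      · have := hgB j hj
        by_cases hp : 0 < A i1 j
        · simp only [hx, if_pos hj, if_pos hp]; omega
        · simp only [hx, if_pos hj, if_neg hp]; omega
      · have hdz : (0:ℤ) ≤ (d:ℤ) := by positivity
        simp only [hx, if_neg hj, hz]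
        split <;> omega
    refine ⟨hInD, ?_⟩
    intro i
    have hsplit : (∑ j, A i j * (x j : ℝ))
        = (∑ j ∈ Λ, A i j * (x j : ℝ)) + ∑ j ∈ Λᶜ, A i j * (x j : ℝ) :=
      (Finset.sum_add_sum_compl Λ _).symm
    by_cases hi1 : i = i1
    · rw [hsplit, hi1, hbv1, hid1 x]
      have he1 : (∑ j ∈ Λ, r j * ((Y x j : ℤ) : ℝ)) = ∑ j ∈ Λ, r j * (g j : ℝ) := by
        apply Finset.sum_congr rfl
        intro j hj
        rw [hYx j hj]
      have he2 : (∑ j ∈ Λᶜ, A i1 j * (x j : ℝ)) = F := by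
        rw [hF]
        apply Finset.sum_congr rfl
        intro j hj
        rw [Finset.mem_compl] at hj
        rw [hxz j hj]
        exact (hzval j hj).1
      rw [he1, he2, hβ1]
      linarith
    · by_cases hi2 : i = i2
      · rw [hsplit, hi2, hbv2, hid2 x]
        have he1 : (∑ j ∈ Λ, c j * ((Y x j : ℤ) : ℝ)) = ∑ j ∈ Λ, c j * (g j : ℝ) := by
          apply Finset.sum_congr rfl
          intro j hj
          rw [hYx j hj]
        have he2 : (∑ j ∈ Λᶜ, A i2 j * (x j : ℝ)) = G := by
          rw [hG]
          apply Finset.sum_congr rfl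
          intro j hj
          rw [Finset.mem_compl] at hj
          rw [hxz j hj]
          exact (hzval j hj).2
        rw [he1, he2, hβ2]
        linarith
      · have hbvi : bv i = bLow := by simp [hbv, hi1, hi2]
        rw [hbvi, hbLow]
        have hterm : ∀ j, -(|A i j| * d) ≤ A i j * (x j : ℝ) := by
          intro j
          have hx0 : (0:ℝ) ≤ (x j : ℝ) := by exact_mod_cast (hInD j).1
          have hxd : (x j : ℝ) ≤ (d:ℝ) := by exact_mod_cast (hInD j).2
          rcases le_or_gt 0 (A i j) with hp | hp
          · have : (0:ℝ) ≤ A i j * (x j:ℝ) := mul_nonneg hp hx0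
            nlinarith [abs_nonneg (A i j)]
          · have : -(|A i j|) = A i j := by rw [abs_of_neg hp]; ring
            nlinarith
        have hsum : -((∑ j, |A i j|) * d) ≤ ∑ j, A i j * (x j : ℝ) := by
          have := Finset.sum_le_sum (fun j (_ : j ∈ Finset.univ) => hterm j)
          rw [Finset.sum_neg_distrib, ← Finset.sum_mul] at this
          linarith [this]
        have hrow : (∑ j, |A i j|) ≤ ∑ i', ∑ j, |A i' j| := by
          apply Finset.single_le_sum (f := fun i' => ∑ j, |A i' j|)
          · intro i' _
            exact Finset.sum_nonneg fun j _ => abs_nonneg _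
          · exact Finset.mem_univ i
        nlinarith
  -- exclusion: any feasible point projects into the window
  have hexcl : ∀ v : Fin n → ℤ, Feas d A bv v →
      (ρ ≤ ∑ j ∈ Λ, r j * ((Y v j : ℤ) : ℝ)) ∧ ((∑ j ∈ Λ, c j * ((Y v j : ℤ) : ℝ)) ≤ τ) := by
    intro v hv
    have h1 := hv.2 i1
    have h2 := hv.2 i2
    rw [hbv1] at h1
    rw [hbv2] at h2
    have hsplit1 : (∑ j, A i1 j * (v j : ℝ))
        = (∑ j ∈ Λ, A i1 j * (v j : ℝ)) + ∑ j ∈ Λᶜ, A i1 j * (v j : ℝ) :=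
      (Finset.sum_add_sum_compl Λ _).symm
    have hsplit2 : (∑ j, A i2 j * (v j : ℝ))
        = (∑ j ∈ Λ, A i2 j * (v j : ℝ)) + ∑ j ∈ Λᶜ, A i2 j * (v j : ℝ) :=
      (Finset.sum_add_sum_compl Λ _).symm
    have hb1 := hoffgen i1 v hv.1
    have hb2 := hoffgen i2 v hv.1
    rw [hsplit1, hid1 v] at h1
    rw [hsplit2, hid2 v] at h2
    rw [← hF] at hb1
    rw [← hG] at hb2
    constructor
    · rw [hβ1] at h1; linarith
    · rw [hβ2] at h2; linarith
  have hYbound : ∀ v : Fin n → ℤ, InD d v → ∀ j ∈ Λ, 0 ≤ Y v j ∧ Y v j ≤ (d:ℤ) := by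
    intro v hv j _
    have := hv j
    simp only [hY]
    split <;> omega
  have hYcong : ∀ (u v : Fin n → ℤ) (j : Fin n), u j = v j → Y u j = Y v j := by
    intro u v j hj
    simp only [hY, hj]
  -- the two witnesses
  set xa : Fin n → ℤ :=
    fun j => if j ∈ Λ then (if 0 < A i1 j then ga j else (d:ℤ) - ga j) else z j with hxa
  set xb : Fin n → ℤ :=
    fun j => if j ∈ Λ then (if 0 < A i1 j then gb j else (d:ℤ) - gb j) else z j with hxb
  have hxaF : Feas d A bv xa := hfeas ga hga hgaR hgaC
  have hxbF : Feas d A bv xb := hfeas gb hgb hgbR hgbC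
  have hYa : ∀ j ∈ Λ, Y xa j = ga j := by
    intro j hj
    by_cases hp : 0 < A i1 j
    · simp [hY, hxa, hj, hp]
    · simp only [hY, hxa, if_pos hj, if_neg hp]
      ring
  have hYb : ∀ j ∈ Λ, Y xb j = gb j := by
    intro j hj
    by_cases hp : 0 < A i1 j
    · simp [hY, hxb, hj, hp]
    · simp only [hY, hxb, if_pos hj, if_neg hp]
      ring
  intro hcon
  have hchain := hcon xa xb hxaF hxbF
  have hinv : ∀ y, Relation.ReflTransGen (SolStep d A bv) xa y → ∀ j ∈ Λ, Y y j = ga j := by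
    intro y hy
    induction hy with
    | refl => exact hYa
    | @tail u v _ hstep ih =>
      obtain ⟨hfu, hfv, hham⟩ := hstep
      simp only [hammingDist] at hham
      obtain ⟨j0, hj0⟩ := Finset.card_eq_one.mp hham
      have hagree : ∀ j : Fin n, j ≠ j0 → u j = v j := by
        intro j hjne
        by_contra hx
        have hmem : j ∈ Finset.univ.filter (fun i => u i ≠ v i) :=
          Finset.mem_filter.mpr ⟨Finset.mem_univ _, hx⟩
        rw [hj0, Finset.mem_singleton] at hmem
        exact hjne hmem
      by_cases hj0Λ : j0 ∈ Λ
      · have hq := hexcl v hfv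
        have hYj0 : Y v j0 = ga j0 := by
          apply hiso (Y v) (hYbound v hfv.1) hq.1 hq.2 j0 hj0Λ
          intro j hjΛ hjne
          rw [hYcong v u j (hagree j hjne).symm]
          exact ih j hjΛ
        intro j hjΛ
        by_cases hjj : j = j0
        · rw [hjj]; exact hYj0
        · rw [hYcong v u j (hagree j hjj).symm]
          exact ih j hjΛ
      · intro j hjΛ
        have hjne : j ≠ j0 := fun hx => hj0Λ (hx ▸ hjΛ)
        rw [hYcong v u j (hagree j hjne).symm]
        exact ih j hjΛ
  obtain ⟨j, hj, hne'⟩ := hgdiff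
  have h1 := hinv xb hchain j hj
  have h2 := hYb j hj
  rw [h2] at h1
  exact hne' h1.symm
end

section
/- Let A ∈ ℝ^{m×2} with no elimination ordering, and let i_1, i_2 ∈ [m] be rows with sgn(a_{i_1 j}) = -sgn(a_{i_2 j}) for j = 1,2. Let A' be the 2×2 submatrix of A on rows i_1, i_2, and suppose b' ∈ ℝ^2 is such that the solution graph of (A', b') over D = {0,...,d} is not connected. Define b ∈ ℝ^m by b_{i_1} = b'_1, b_{i_2} = b'_2, and b_k = -d·(|a_{k1}| + |a_{k2}|) for k ∉ {i_1, i_2}. Then R(A,b) = R(A',b') as subsets of D^2, and the solution graph of (A,b) is not connected. -/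
open Finset

theorem stmt17 (d : ℕ) (hd : 0 < d) (m : ℕ) (A : Matrix (Fin m) (Fin 2) ℝ)
    (hEO : ¬ HasEO A) (i1 i2 : Fin m)
    (hsgn : ∀ j, Real.sign (A i1 j) = - Real.sign (A i2 j))
    (A' : Matrix (Fin 2) (Fin 2) ℝ)
    (hA' : A' = !![A i1 0, A i1 1; A i2 0, A i2 1])
    (b' : Fin 2 → ℝ) (hb' : ¬ SolConnected d A' b')
    (b : Fin m → ℝ) (hb1 : b i1 = b' 0) (hb2 : b i2 = b' 1)
    (hbk : ∀ k, k ≠ i1 → k ≠ i2 → b k = -(d : ℝ) * (|A k 0| + |A k 1|)) :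
    (∀ x : Fin 2 → ℤ, Feas d A b x ↔ Feas d A' b' x) ∧ ¬ SolConnected d A b := by

  have key : ∀ x : Fin 2 → ℤ, Feas d A b x ↔ Feas d A' b' x := by
    intro x
    constructor
    · rintro ⟨hx, hf⟩
      refine ⟨hx, ?_⟩
      intro i
      fin_cases i
      · have := hf i1
        simpa [hA', Fin.sum_univ_two, hb1] using this
      · have := hf i2
        simpa [hA', Fin.sum_univ_two, hb2] using this
    · rintro ⟨hx, hf⟩
      refine ⟨hx, ?_⟩
      intro k
      by_cases h1 : k = i1
      · subst h1
        have := hf 0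
        simpa [hA', Fin.sum_univ_two, hb1] using this
      by_cases h2 : k = i2
      · subst h2
        have := hf 1
        simpa [hA', Fin.sum_univ_two, hb2] using this
      · rw [hbk k h1 h2]
        rw [Fin.sum_univ_two]
        have bd : ∀ j : Fin 2, -|A k j| * (d : ℝ) ≤ A k j * (x j : ℝ) := by
          intro j
          obtain ⟨h0, hd'⟩ := hx j
          have h0' : (0 : ℝ) ≤ (x j : ℝ) := by exact_mod_cast h0
          have hd'' : ((x j : ℝ)) ≤ (d : ℝ) := by exact_mod_cast hd'
          calc -|A k j| * (d : ℝ) ≤ -|A k j| * (x j : ℝ) := by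
                nlinarith [abs_nonneg (A k j)]
            _ ≤ A k j * (x j : ℝ) := by nlinarith [neg_abs_le (A k j)]
        have b0 := bd 0
        have b1 := bd 1
        nlinarith
  refine ⟨key, ?_⟩
  intro hcon
  apply hb'
  intro x y hx hy
  have h := hcon x y ((key x).mpr hx) ((key y).mpr hy)
  refine Relation.ReflTransGen.mono ?_ x y h
  rintro u v ⟨hu, hv, hh⟩
  exact ⟨(key u).mp hu, (key v).mp hv, hh⟩
end
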